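/- arXiv:math/0412041 — 4 statements merged into one kernel-verified Lean document; each statement's English description precedes it below -/
import Mathlib

section
/- For n ≥ 1, the n-th large Schröder number r_n equals twice the n-th small Schröder number s_n. -/
open Matrix

/-- A lattice point in the plane. -/
abbrev Pt := ℤ × ℤ

/-- The points visited by a path starting at `p` taking steps `l`. -/
def pts (p : Pt) (l : List Pt) : List Pt := l.scanl (· + ·) p

/-- The endpoint of a path starting at `p` taking steps `l`. -/
def endpt (p : Pt) (l : List Pt) : Pt := l.foldl (· + ·) p

/-- `l` is the step list of a large Schröder path from `p` to `q`:
steps are U=(1,1), D=(1,-1), L=(2,0) and the path never goes below the x-axis. -/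
def IsLargePath (p q : Pt) (l : List Pt) : Prop :=
  (∀ s ∈ l, s = (1, 1) ∨ s = (1, -1) ∨ s = (2, 0)) ∧
  (∀ v ∈ pts p l, 0 ≤ v.2) ∧
  endpt p l = q

/-- A small Schröder path: a large Schröder path with no level step on the x-axis. -/
def IsSmallPath (p q : Pt) (l : List Pt) : Prop :=
  IsLargePath p q l ∧
  ∀ (i : ℕ) (h : i < l.length), l.get ⟨i, h⟩ = (2, 0) → (endpt p (l.take i)).2 ≠ 0

/-- The `k`-th large Schröder number: the number of large Schröder paths
from `(0,0)` to `(2k,0)`. -/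
noncomputable def schR (k : ℕ) : ℕ := Nat.card {l : List Pt // IsLargePath (0, 0) (2 * k, 0) l}

/-- The `k`-th small Schröder number: the number of small Schröder paths
from `(0,0)` to `(2k,0)`. -/
noncomputable def schS (k : ℕ) : ℕ := Nat.card {l : List Pt // IsSmallPath (0, 0) (2 * k, 0) l}

/-- `Π n`: `n`-tuples of pairwise non-intersecting large Schröder paths where the
`i`-th path (1-indexed; here index `i : Fin n` stands for `i+1`) runs from
`(-2(i+1)+1, 0)` to `(2(i+1)-1, 0)`. -/
def PiSet (n : ℕ) : Set (Fin n → List Pt) :=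
  {π | (∀ i : Fin n, IsLargePath (-(2 * (i : ℤ) + 1), 0) (2 * (i : ℤ) + 1, 0) (π i)) ∧
    ∀ i j : Fin n, i ≠ j → ∀ v ∈ pts (-(2 * (i : ℤ) + 1), 0) (π i),
      v ∉ pts (-(2 * (j : ℤ) + 1), 0) (π j)}

/-- `Ω n`: the analogous tuples of small Schröder paths. -/
def OmegaSet (n : ℕ) : Set (Fin n → List Pt) :=
  {ω | (∀ i : Fin n, IsSmallPath (-(2 * (i : ℤ) + 1), 0) (2 * (i : ℤ) + 1, 0) (ω i)) ∧
    ∀ i j : Fin n, i ≠ j → ∀ v ∈ pts (-(2 * (i : ℤ) + 1), 0) (ω i),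
      v ∉ pts (-(2 * (j : ℤ) + 1), 0) (ω j)}

/-- `Π* n`: `n`-tuples `(μ₀,…,μ_{n-1})` of pairwise non-intersecting large Schröder
paths with `μ i` from `(-2i,0)` to `(2i,0)`. -/
def PiStarSet (n : ℕ) : Set (Fin n → List Pt) :=
  {μ | (∀ i : Fin n, IsLargePath (-(2 * (i : ℤ)), 0) (2 * (i : ℤ), 0) (μ i)) ∧
    ∀ i j : Fin n, i ≠ j → ∀ v ∈ pts (-(2 * (i : ℤ)), 0) (μ i),
      v ∉ pts (-(2 * (j : ℤ)), 0) (μ j)}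

/-- `Ω* n`: the analogous tuples of small Schröder paths. -/
def OmegaStarSet (n : ℕ) : Set (Fin n → List Pt) :=
  {μ | (∀ i : Fin n, IsSmallPath (-(2 * (i : ℤ)), 0) (2 * (i : ℤ), 0) (μ i)) ∧
    ∀ i j : Fin n, i ≠ j → ∀ v ∈ pts (-(2 * (i : ℤ)), 0) (μ i),
      v ∉ pts (-(2 * (j : ℤ)), 0) (μ j)}

/-- The unit square with lower-left corner `c` lies in the Aztec diamond `Az(n)`,
i.e. all four of its corners `(x,y)` satisfy `|x| + |y| ≤ n + 1`. -/
def aztecCell (n : ℕ) (c : Pt) : Prop :=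
  |c.1| + |c.2| ≤ (n : ℤ) + 1 ∧ |c.1 + 1| + |c.2| ≤ (n : ℤ) + 1 ∧
  |c.1| + |c.2 + 1| ≤ (n : ℤ) + 1 ∧ |c.1 + 1| + |c.2 + 1| ≤ (n : ℤ) + 1

/-- Two unit squares (given by lower-left corners) are edge-adjacent,
so together they form a 1×2 or 2×1 domino. -/
def adjCell (c d : Pt) : Prop :=
  d = (c.1 + 1, c.2) ∨ d = (c.1 - 1, c.2) ∨ d = (c.1, c.2 + 1) ∨ d = (c.1, c.2 - 1)

/-- A domino tiling of `Az(n)`, encoded as the involution matching each cell of the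
diamond with the other cell of its domino (and fixing everything outside). -/
def IsAztecTiling (n : ℕ) (m : Pt → Pt) : Prop :=
  (∀ c, aztecCell n c → aztecCell n (m c) ∧ adjCell c (m c) ∧ m (m c) = c) ∧
  ∀ c, ¬ aztecCell n c → m c = c

/-- The number of domino tilings of the Aztec diamond of order `n`. -/
noncomputable def aztecTilingCount (n : ℕ) : ℕ := Nat.card {m : Pt → Pt // IsAztecTiling n m}

/-- The map sending `(π₁,…,π_{n-1})` to `(μ₀,…,μ_{n-1})` with `μ₀` the empty path
at the origin and `μᵢ = U πᵢ D`. -/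
def extendStar {n : ℕ} (π : Fin (n - 1) → List Pt) (i : Fin n) : List Pt :=
  if h : (i : ℕ) = 0 then []
  else (1, 1) :: π ⟨(i : ℕ) - 1, by omega⟩ ++ [(1, -1)]

namespace SchAux

def Steps (l : List Pt) : Prop := ∀ s ∈ l, s = ((1:ℤ),(1:ℤ)) ∨ s = (1,-1) ∨ s = (2,0)
def NN (l : List Pt) : Prop := ∀ k : ℕ, 0 ≤ ((l.take k).sum).2
def NF (l : List Pt) : Prop :=
  ∀ (i : ℕ) (h : i < l.length), l.get ⟨i, h⟩ = ((2:ℤ),(0:ℤ)) → ((l.take i).sum).2 ≠ 0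

lemma endpt_eq (p : Pt) (l : List Pt) : endpt p l = p + l.sum := by
  induction l generalizing p with
  | nil => simp [endpt]
  | cons a t ih =>
    show endpt (p + a) t = _
    rw [ih (p + a), List.sum_cons, add_assoc]

lemma mem_pts {v p : Pt} {l : List Pt} :
    v ∈ pts p l ↔ ∃ k, k ≤ l.length ∧ v = p + (l.take k).sum := by
  induction l generalizing p with
  | nil =>
    simp [pts]
  | cons a t ih =>
    rw [show pts p (a :: t) = p :: pts (p + a) t from List.scanl_cons]
    simp only [List.mem_cons, ih]
    constructor
    · rintro (rfl | ⟨k, hk, rfl⟩)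
      · exact ⟨0, by simp⟩
      · exact ⟨k + 1, by simpa using hk, by simp [add_assoc]⟩
    · rintro ⟨k, hk, rfl⟩
      match k with
      | 0 => left; simp
      | k + 1 => right; exact ⟨k, by simpa using hk, by simp [add_assoc]⟩

lemma isLarge_iff (q : Pt) (l : List Pt) :
    IsLargePath (0, 0) q l ↔ Steps l ∧ NN l ∧ l.sum = q := by
  unfold IsLargePath
  constructor
  · rintro ⟨h1, h2, h3⟩
    refine ⟨h1, ?_, by rw [endpt_eq] at h3; simpa [Prod.ext_iff] using h3⟩
    intro k
    by_cases hk : k ≤ l.length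
    · simpa using h2 _ (mem_pts.mpr ⟨k, hk, rfl⟩)
    · rw [List.take_of_length_le (by omega)]
      have := h2 _ (mem_pts.mpr ⟨l.length, le_rfl, by rw [List.take_length]⟩)
      simpa using this
  · rintro ⟨h1, h2, h3⟩
    refine ⟨h1, ?_, by rw [endpt_eq, h3]; simp⟩
    intro v hv
    obtain ⟨k, hk, rfl⟩ := mem_pts.mp hv
    simpa using h2 k

lemma isSmall_iff (q : Pt) (l : List Pt) :
    IsSmallPath (0, 0) q l ↔ (Steps l ∧ NN l ∧ l.sum = q) ∧ NF l := by
  unfold IsSmallPath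
  rw [isLarge_iff]
  apply and_congr Iff.rfl
  unfold NF
  constructor
  · intro h i hi hget
    have := h i hi hget
    rw [endpt_eq] at this
    simpa using this
  · intro h i hi hget
    rw [endpt_eq]
    have := h i hi hget
    simpa using this


lemma sum_take_append (P Q : List Pt) (k : ℕ) :
    ((P ++ Q).take k).sum = (P.take k).sum + (Q.take (k - P.length)).sum := by
  rw [List.take_append, List.sum_append]

lemma split_of_eq {a : Pt} {P Q P' Q' : List Pt} (h : P ++ a :: Q = P' ++ a :: Q')
    (hlt : P.length < P'.length) : ∃ R, P' = P ++ a :: R ∧ Q = R ++ a :: Q' := by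
  induction P generalizing P' with
  | nil =>
    cases P' with
    | nil => simp at hlt
    | cons b P'' =>
      simp only [List.nil_append, List.cons_append, List.cons.injEq] at h
      obtain ⟨rfl, hQ⟩ := h
      exact ⟨P'', by simp, hQ⟩
  | cons p P ih =>
    cases P' with
    | nil => simp at hlt
    | cons p' P'' =>
      simp only [List.cons_append, List.cons.injEq] at h
      obtain ⟨rfl, h2⟩ := h
      obtain ⟨R, h1, h2⟩ := ih h2 (by simpa using hlt)
      exact ⟨R, by simp [h1], h2⟩

lemma get_append_cons (R T : List Pt) (b : Pt) (i : ℕ) (h : i = R.length)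
    (h' : i < (R ++ b :: T).length) : (R ++ b :: T)[i] = b := by
  subst h
  rw [List.getElem_append_right le_rfl]
  simp

lemma sum_UD (P Q : List Pt) :
    (((1,1) : Pt) :: (P ++ ((1,-1) : Pt) :: Q)).sum = (1,1) + P.sum + (1,-1) + Q.sum := by
  simp [List.sum_append]
  abel

lemma take_UD (P Q : List Pt) (k : ℕ) :
    ((((1,1) : Pt) :: (P ++ ((1,-1) : Pt) :: Q)).take k).sum =
      if k = 0 then 0
      else if k ≤ P.length + 1 then (1,1) + (P.take (k-1)).sum
      else (1,1) + P.sum + (1,-1) + (Q.take (k - P.length - 2)).sum := by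
  match k with
  | 0 => simp
  | (k+1) =>
    rw [List.take_succ_cons, List.sum_cons, sum_take_append]
    rcases le_or_gt k P.length with h | h
    · rw [if_neg (by omega), if_pos (by omega), Nat.sub_eq_zero_of_le h]
      simp
    · rw [if_neg (by omega), if_neg (by omega), List.take_of_length_le (by omega)]
      obtain ⟨j, hj⟩ : ∃ j, k - P.length = j + 1 := ⟨k - P.length - 1, by omega⟩
      rw [hj, List.take_succ_cons, List.sum_cons]
      have : k + 1 - P.length - 2 = j := by omega
      rw [this]
      abel

lemma bridge_UD {P Q : List Pt}
    (hPs : Steps P) (hPn : NN P) (hP0 : P.sum.2 = 0)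
    (hQs : Steps Q) (hQn : NN Q) (hQ0 : Q.sum.2 = 0) (hQf : NF Q) :
    Steps ((1,1) :: (P ++ (1,-1) :: Q)) ∧ NN ((1,1) :: (P ++ (1,-1) :: Q)) ∧
    ((1,1) :: (P ++ ((1,-1):Pt) :: Q)).sum = (P.sum.1 + Q.sum.1 + 2, 0) ∧
    NF ((1,1) :: (P ++ (1,-1) :: Q)) := by
  refine ⟨?_, ?_, ?_, ?_⟩
  · intro s hs
    simp only [List.mem_cons, List.mem_append] at hs
    rcases hs with rfl | (h | rfl | h)
    · left; rfl
    · exact hPs s h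
    · right; left; rfl
    · exact hQs s h
  · intro k
    rw [take_UD]
    split_ifs with h1 h2
    · simp
    · have := hPn (k-1)
      simp only [Prod.snd_add]
      omega
    · have := hQn (k - P.length - 2)
      simp only [Prod.snd_add]
      omega
  · rw [sum_UD]
    have : ∀ a b : Pt, (a + b).1 = a.1 + b.1 ∧ (a + b).2 = a.2 + b.2 := fun a b => ⟨rfl, rfl⟩
    refine Prod.ext ?_ ?_ <;> simp <;> omega
  · intro i hi hget
    rw [List.get_eq_getElem] at hget
    match i with
    | 0 => simp [Prod.ext_iff] at hget
    | (i+1) =>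
      rw [List.getElem_cons_succ] at hget
      have hi' : i < P.length + 1 + Q.length := by
        simp [List.length_append] at hi; omega
      rcases Nat.lt_trichotomy i P.length with h | h | h
      · -- inside P : height ≥ 1
        rw [take_UD, if_neg (by omega), if_pos (by omega)]
        simp only [Nat.add_sub_cancel, Prod.snd_add]
        have := hPn i
        omega
      · -- the D step
        exfalso
        rw [List.getElem_append_right (by omega)] at hget
        subst h
        simp [Prod.ext_iff] at hget
      · -- inside Q
        rw [List.getElem_append_right (by omega)] at hget
        obtain ⟨j, hj⟩ : ∃ j, i - P.length = j + 1 := ⟨i - P.length - 1, by omega⟩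
        simp only [hj, List.getElem_cons_succ] at hget
        have hjQ : j < Q.length := by omega
        have := hQf j hjQ (by rw [List.get_eq_getElem]; exact hget)
        rw [take_UD, if_neg (by omega), if_neg (by omega)]
        have hij : i + 1 - P.length - 2 = j := by omega
        rw [hij]
        simp only [Prod.snd_add]
        omega
lemma sum_L (P Q : List Pt) :
    (P ++ ((2,0) : Pt) :: Q).sum = P.sum + (2,0) + Q.sum := by
  simp [List.sum_append]
  abel

lemma take_L (P Q : List Pt) (k : ℕ) :
    ((P ++ ((2,0) : Pt) :: Q).take k).sum =
      if k ≤ P.length then (P.take k).sum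
      else P.sum + (2,0) + (Q.take (k - P.length - 1)).sum := by
  rw [sum_take_append]
  rcases le_or_gt k P.length with h | h
  · rw [if_pos h, Nat.sub_eq_zero_of_le h]
    simp
  · rw [if_neg (by omega), List.take_of_length_le (by omega)]
    obtain ⟨j, hj⟩ : ∃ j, k - P.length = j + 1 := ⟨k - P.length - 1, by omega⟩
    rw [hj, List.take_succ_cons, List.sum_cons, Nat.add_sub_cancel]
    abel

lemma bridge_L {P Q : List Pt}
    (hPs : Steps P) (hPn : NN P) (hP0 : P.sum.2 = 0)
    (hQs : Steps Q) (hQn : NN Q) (hQ0 : Q.sum.2 = 0) :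
    Steps (P ++ (2,0) :: Q) ∧ NN (P ++ (2,0) :: Q) ∧
    (P ++ ((2,0):Pt) :: Q).sum = (P.sum.1 + Q.sum.1 + 2, 0) ∧
    ¬ NF (P ++ (2,0) :: Q) := by
  refine ⟨?_, ?_, ?_, ?_⟩
  · intro s hs
    simp only [List.mem_append, List.mem_cons] at hs
    rcases hs with h | rfl | h
    · exact hPs s h
    · right; right; rfl
    · exact hQs s h
  · intro k
    rw [take_L]
    split_ifs with h1
    · exact hPn k
    · have := hQn (k - P.length - 1)
      simp only [Prod.snd_add]
      omega
  · rw [sum_L]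
    refine Prod.ext ?_ ?_ <;> simp <;> omega
  · intro hNF
    have hlen : P.length < (P ++ ((2,0):Pt) :: Q).length := by
      simp
    have hget : (P ++ ((2,0):Pt) :: Q).get ⟨P.length, hlen⟩ = (2,0) := by
      rw [List.get_eq_getElem]
      exact get_append_cons P Q (2,0) P.length rfl hlen
    have := hNF P.length hlen hget
    rw [take_L, if_pos le_rfl, List.take_of_length_le le_rfl] at this
    exact this hP0

lemma inj_UD {P Q P' Q' : List Pt} (hPn : NN P) (hP0 : P.sum.2 = 0)
    (hPn' : NN P') (hP0' : P'.sum.2 = 0)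
    (h : P ++ ((1,-1) : Pt) :: Q = P' ++ ((1,-1) : Pt) :: Q') : P = P' ∧ Q = Q' := by
  have key : ∀ (A B R : List Pt), NN B → A.sum.2 = 0 → B = A ++ (1,-1) :: R → False := by
    intro A B R hBn hA0 hB
    have := hBn (A.length + 1)
    rw [hB, sum_take_append, List.take_of_length_le (by omega),
      show A.length + 1 - A.length = 1 by omega, List.take_succ_cons, List.take_zero,
      List.sum_cons, List.sum_nil] at this
    simp [Prod.snd_add] at this
    omega
  rcases Nat.lt_trichotomy P.length P'.length with hlt | heq | hgt
  · obtain ⟨R, h1, _⟩ := split_of_eq h hlt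
    exact absurd (key P P' R hPn' hP0 h1) (by simp)
  · obtain ⟨h1, h2⟩ := List.append_inj h heq
    exact ⟨h1, by simpa using h2⟩
  · obtain ⟨R, h1, _⟩ := split_of_eq h.symm hgt
    exact absurd (key P' P R hPn hP0' h1) (by simp)

lemma inj_L {P Q P' Q' : List Pt} (hP0 : P.sum.2 = 0) (hP0' : P'.sum.2 = 0)
    (hQf : NF Q) (hQf' : NF Q')
    (h : P ++ ((2,0) : Pt) :: Q = P' ++ ((2,0) : Pt) :: Q') : P = P' ∧ Q = Q' := by
  have key : ∀ (A B R T T' : List Pt), A.sum.2 = 0 → B.sum.2 = 0 → NF T →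
      B = A ++ (2,0) :: R → T = R ++ (2,0) :: T' → False := by
    intro A B R T T' hA0 hB0 hT hB hTeq
    have hR0 : R.sum.2 = 0 := by
      rw [hB, sum_L] at hB0
      simp only [Prod.snd_add] at hB0
      omega
    subst hTeq
    have hlen : R.length < (R ++ ((2,0):Pt) :: T').length := by simp
    have hget : (R ++ ((2,0):Pt) :: T').get ⟨R.length, hlen⟩ = (2,0) := by
      rw [List.get_eq_getElem]
      exact get_append_cons R T' (2,0) R.length rfl hlen
    have := hT R.length hlen hget
    rw [take_L, if_pos le_rfl, List.take_of_length_le le_rfl] at this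
    exact this hR0
  rcases Nat.lt_trichotomy P.length P'.length with hlt | heq | hgt
  · obtain ⟨R, h1, h2⟩ := split_of_eq h hlt
    exact absurd (key P P' R Q Q' hP0 hP0' hQf h1 h2) (by simp)
  · obtain ⟨h1, h2⟩ := List.append_inj h heq
    exact ⟨h1, by simpa using h2⟩
  · obtain ⟨R, h1, h2⟩ := split_of_eq h.symm hgt
    exact absurd (key P' P R Q' Q hP0' hP0 hQf' h1 h2) (by simp)

lemma surj_L {l : List Pt} (hs : Steps l) (hn : NN l) (h0 : l.sum.2 = 0) (hnf : ¬ NF l) :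
    ∃ P Q : List Pt, (Steps P ∧ NN P ∧ P.sum.2 = 0) ∧
      (Steps Q ∧ NN Q ∧ Q.sum.2 = 0 ∧ NF Q) ∧
      P.sum.1 + Q.sum.1 + 2 = l.sum.1 ∧ l = P ++ (2,0) :: Q := by
  classical
  unfold NF at hnf
  push_neg at hnf
  obtain ⟨iw, hiw, hgetw, hsw⟩ := hnf
  rw [List.get_eq_getElem] at hgetw
  set p : ℕ → Prop := fun i => (l[i]? = some ((2:ℤ),(0:ℤ))) ∧ ((l.take i).sum).2 = 0 with hp
  have hpw : p iw := ⟨List.getElem?_eq_some_iff.mpr ⟨hiw, hgetw⟩, hsw⟩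
  have hspec : p (Nat.findGreatest p l.length) :=
    Nat.findGreatest_spec (le_of_lt hiw) hpw
  set i₀ := Nat.findGreatest p l.length with hi₀
  obtain ⟨hlt₀, hget₀⟩ := List.getElem?_eq_some_iff.mp hspec.1
  have hs0 : ((l.take i₀).sum).2 = 0 := hspec.2
  have hl : l = l.take i₀ ++ (2,0) :: l.drop (i₀ + 1) := by
    conv_lhs => rw [← List.take_append_drop i₀ l, List.drop_eq_getElem_cons hlt₀, hget₀]
  have hA : ((l.take (i₀ + 1)).sum).2 = 0 := by
    rw [List.take_succ, List.getElem?_eq_getElem hlt₀, hget₀, List.sum_append]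
    simp [hs0]
  have he : ∀ k, ((l.drop (i₀ + 1)).take k).sum.2 =
      (l.take (i₀ + 1 + k)).sum.2 := by
    intro k
    have : (l.take (i₀ + 1 + k)).sum = (l.take (i₀ + 1)).sum + ((l.drop (i₀ + 1)).take k).sum := by
      rw [List.take_add, List.sum_append]
    have := congrArg Prod.snd this
    simp only [Prod.snd_add] at this
    omega
  have hlenQ : (l.drop (i₀ + 1)).length = l.length - i₀ - 1 := by
    rw [List.length_drop]; omega
  have hQ0 : ((l.drop (i₀ + 1)).sum).2 = 0 := by
    have e2 : l.sum = (l.take (i₀+1)).sum + (l.drop (i₀+1)).sum := by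
      rw [← List.sum_append, List.take_append_drop]
    have := congrArg Prod.snd e2
    simp only [Prod.snd_add] at this
    omega
  have hQf : NF (l.drop (i₀ + 1)) := by
    intro k hk hgetk
    rw [List.get_eq_getElem, List.getElem_drop] at hgetk
    have hkl : i₀ + 1 + k < l.length := by omega
    intro hzero
    have hpk : p (i₀ + 1 + k) := by
      refine ⟨List.getElem?_eq_some_iff.mpr ⟨hkl, hgetk⟩, ?_⟩
      have := he k
      omega
    exact Nat.findGreatest_is_greatest (P := p) (n := l.length) (by rw [← hi₀]; omega) (by omega) hpk
  have hxeq : (l.take i₀).sum.1 + (l.drop (i₀+1)).sum.1 + 2 = l.sum.1 := by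
    have := congrArg Prod.fst (congrArg List.sum hl)
    rw [sum_L] at this
    simp only [Prod.fst_add] at this
    omega
  refine ⟨l.take i₀, l.drop (i₀ + 1),
    ⟨fun s hs' => hs s (List.mem_of_mem_take hs'), ?_, hs0⟩,
    ⟨fun s hs' => hs s (List.mem_of_mem_drop hs'), ?_, hQ0, hQf⟩, hxeq, hl⟩
  · intro k
    rw [List.take_take]
    exact hn _
  · intro k
    rw [he k]
    exact hn _

lemma surj_UD {l : List Pt} (hs : Steps l) (hn : NN l) (h0 : l.sum.2 = 0)
    (hf : NF l) (hne : l ≠ []) :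
    ∃ P Q : List Pt, (Steps P ∧ NN P ∧ P.sum.2 = 0) ∧
      (Steps Q ∧ NN Q ∧ Q.sum.2 = 0 ∧ NF Q) ∧
      P.sum.1 + Q.sum.1 + 2 = l.sum.1 ∧ l = (1,1) :: (P ++ (1,-1) :: Q) := by
  classical
  have hlpos : 0 < l.length := List.length_pos_iff.mpr hne
  have hex : ∃ k, 1 ≤ k ∧ ((l.take k).sum).2 = 0 :=
    ⟨l.length, hlpos, by rw [List.take_length]; exact h0⟩
  set m := Nat.find hex with hmdef
  obtain ⟨hm1, hm2⟩ : 1 ≤ m ∧ ((l.take m).sum).2 = 0 := Nat.find_spec hex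
  have hmin : ∀ k, 1 ≤ k → k < m → ((l.take k).sum).2 ≠ 0 := by
    intro k h1 h2 hc
    exact Nat.find_min hex h2 ⟨h1, hc⟩
  have hmle : m ≤ l.length := Nat.find_min' hex ⟨hlpos, by rw [List.take_length]; exact h0⟩
  have hpos : ∀ k, 1 ≤ k → k < m → 1 ≤ ((l.take k).sum).2 := by
    intro k h1 h2
    have := hn k
    have := hmin k h1 h2
    omega
  -- the step at index m - 1 is (1,-1)
  have hjlt : m - 1 < l.length := by omega
  have htake : (l.take m).sum = (l.take (m-1)).sum + l[m-1] := by
    conv_lhs => rw [show m = (m-1) + 1 by omega]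
    rw [List.take_succ, List.getElem?_eq_getElem hjlt, List.sum_append]
    simp
  have htake2 : ((l.take (m-1)).sum).2 + (l[m-1]).2 = 0 := by
    have := congrArg Prod.snd htake
    simp only [Prod.snd_add] at this
    omega
  have hstep : l[m-1] = ((1:ℤ),(-1:ℤ)) := by
    rcases hs _ (List.getElem_mem hjlt) with h | h | h
    · exfalso
      have h2 : (l[m-1]).2 = 1 := by rw [h]
      have := hn (m-1)
      -- if m = 1 then take 0 sum = 0 contradicts htake2; else hpos
      rcases Nat.eq_or_lt_of_le hm1 with h1 | h1
      · have hz : ((l.take (m-1)).sum).2 = 0 := by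
          rw [show m - 1 = 0 by omega]
          simp
        omega
      · omega
    · exact h
    · exfalso
      have h2 : (l[m-1]).2 = 0 := by rw [h]
      have := hf (m-1) hjlt (by rw [List.get_eq_getElem]; exact h)
      omega
  have hj2 : ((l.take (m-1)).sum).2 = 1 := by
    rw [hstep] at htake2
    have : (((1:ℤ),(-1:ℤ)) : Pt).2 = -1 := rfl
    omega
  have hj1 : 1 ≤ m - 1 := by
    by_contra hc
    rw [show m - 1 = 0 by omega] at hj2
    simp at hj2
  -- head of l is (1,1)
  obtain ⟨a, t, rfl⟩ := List.exists_cons_of_ne_nil hne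
  have ha : a = ((1:ℤ),(1:ℤ)) := by
    rcases hs a List.mem_cons_self with h | h | h
    · exact h
    · exfalso
      have := hn 1
      rw [List.take_succ_cons, List.take_zero] at this
      rw [h] at this
      simp at this
    · exfalso
      have := hf 0 (by simp) (by rw [List.get_eq_getElem]; simpa using h)
      simp at this
  subst ha
  set j := m - 1 with hjdef
  have hjt : j - 1 < t.length := by
    simp at hjlt
    omega
  -- t-level prefix sums
  have htsum : ∀ k, ((t.take k).sum).2 = ((((1,1):Pt) :: t).take (k+1)).sum.2 - 1 := by
    intro k
    rw [List.take_succ_cons, List.sum_cons]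
    simp only [Prod.snd_add]
    omega
  have htget : t[j-1]'hjt = ((1:ℤ),(-1:ℤ)) := by
    have h1 : (((1,1):Pt) :: t)[j]? = t[j-1]? := by
      conv_lhs => rw [show j = (j-1)+1 by omega]
      exact List.getElem?_cons_succ ..
    have h2 : (((1,1):Pt) :: t)[j]? = some ((1,-1) : Pt) := by
      rw [List.getElem?_eq_getElem hjlt, hstep]
    rw [List.getElem?_eq_getElem hjt] at h1
    exact Option.some.inj (h1.symm.trans h2)
  have hteq : t = t.take (j-1) ++ (1,-1) :: t.drop j := by
    conv_lhs => rw [← List.take_append_drop (j-1) t, List.drop_eq_getElem_cons hjt, htget]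
    rw [show j - 1 + 1 = j by omega]
  -- P := t.take (j-1)
  have hPn : NN (t.take (j-1)) := by
    intro k
    rw [List.take_take]
    have hle : min k (j-1) ≤ j - 1 := min_le_right ..
    have := htsum (min k (j-1))
    have := hpos (min k (j-1) + 1) (by omega) (by omega)
    omega
  have hP0 : ((t.take (j-1)).sum).2 = 0 := by
    have := htsum (j-1)
    rw [show j - 1 + 1 = j by omega] at this
    omega
  -- Q := t.drop j  = l.drop m
  have hQdef : t.drop j = (((1,1):Pt) :: t).drop m := by
    rw [show m = j + 1 by omega]
    simp
  have heQ : ∀ k, (((t.drop j).take k).sum).2 = (((((1,1):Pt) :: t).take (m + k)).sum).2 := by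
    intro k
    rw [hQdef]
    have : ((((1,1):Pt) :: t).take (m + k)).sum =
        ((((1,1):Pt) :: t).take m).sum + ((((1,1):Pt) :: t).drop m |>.take k).sum := by
      rw [List.take_add, List.sum_append]
    have := congrArg Prod.snd this
    simp only [Prod.snd_add] at this
    omega
  have hQn : NN (t.drop j) := by
    intro k
    rw [heQ k]
    exact hn _
  have hQ0 : ((t.drop j).sum).2 = 0 := by
    have hlen : (t.drop j).length = t.length - j := by simp
    have := heQ (t.drop j).length
    rw [List.take_of_length_le (le_refl _), List.take_of_length_le (by simp; omega)] at this
    omega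
  have hQf : NF (t.drop j) := by
    intro k hk hgetk
    rw [List.get_eq_getElem] at hgetk
    have hk' : j + k < t.length := by
      have := hk
      simp [List.length_drop] at this
      omega
    have h1 : t[j+k]? = some ((2,0) : Pt) := by
      rw [List.getElem?_eq_getElem hk']
      exact congrArg some (by rw [← List.getElem_drop]; exact hgetk)
    have e : (((1,1):Pt) :: t)[m+k]? = t[j+k]? := by
      rw [show m + k = (j+k)+1 by omega]
      exact List.getElem?_cons_succ ..
    obtain ⟨hkl, hgetl⟩ := List.getElem?_eq_some_iff.mp (e.trans h1)
    have := hf (m + k) hkl (by rw [List.get_eq_getElem]; exact hgetl)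
    rw [heQ k]
    exact this
  have hfinal : (((1,1):Pt) :: t) = (1,1) :: (t.take (j-1) ++ (1,-1) :: t.drop j) := by
    rw [← hteq]
  have hxeq : ((t.take (j-1)).sum).1 + ((t.drop j).sum).1 + 2 = ((((1,1):Pt) :: t)).sum.1 := by
    have := congrArg Prod.fst (congrArg List.sum hfinal)
    rw [sum_UD] at this
    simp only [Prod.fst_add] at this
    omega
  refine ⟨t.take (j-1), t.drop j,
    ⟨?_, hPn, hP0⟩, ⟨?_, hQn, hQ0, hQf⟩, hxeq, hfinal⟩
  · intro s hs'
    exact hs s (List.mem_cons_of_mem _ (List.mem_of_mem_take hs'))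
  · intro s hs'
    exact hs s (List.mem_cons_of_mem _ (List.mem_of_mem_drop hs'))

lemma SC_iff (l : List Pt) :
    (∀ (i : ℕ) (h : i < l.length), l.get ⟨i, h⟩ = (2, 0) →
      (endpt (0, 0) (l.take i)).2 ≠ 0) ↔ NF l := by
  unfold NF
  constructor
  · intro h i hi hget
    have := h i hi hget
    rw [endpt_eq] at this
    simpa using this
  · intro h i hi hget
    rw [endpt_eq]
    have := h i hi hget
    simpa using this

def PairT (n : ℕ) : Type := {pq : List Pt × List Pt //
  (Steps pq.1 ∧ NN pq.1 ∧ pq.1.sum.2 = 0) ∧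
  (Steps pq.2 ∧ NN pq.2 ∧ pq.2.sum.2 = 0 ∧ NF pq.2) ∧
  pq.1.sum.1 + pq.2.sum.1 + 2 = 2 * (n : ℤ)}

noncomputable def eSmall (n : ℕ) (hn : 1 ≤ n) :
    PairT n ≃ {l : List Pt // IsSmallPath (0, 0) (2 * n, 0) l} := by
  refine Equiv.ofBijective (fun x => ⟨(1,1) :: (x.1.1 ++ (1,-1) :: x.1.2), ?_⟩) ⟨?_, ?_⟩
  · obtain ⟨⟨hPs, hPn, hP0⟩, ⟨hQs, hQn, hQ0, hQf⟩, hx⟩ := x.2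
    obtain ⟨h1, h2, h3, h4⟩ := bridge_UD hPs hPn hP0 hQs hQn hQ0 hQf
    rw [isSmall_iff]
    refine ⟨⟨h1, h2, ?_⟩, h4⟩
    rw [h3, hx]
  · rintro ⟨⟨P, Q⟩, ⟨hPs, hPn, hP0⟩, ⟨hQs, hQn, hQ0, hQf⟩, hx⟩
      ⟨⟨P', Q'⟩, ⟨hPs', hPn', hP0'⟩, ⟨hQs', hQn', hQ0', hQf'⟩, hx'⟩ h
    simp only [Subtype.mk.injEq, List.cons.injEq, true_and] at h
    obtain ⟨h1, h2⟩ := inj_UD hPn hP0 hPn' hP0' h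
    exact Subtype.ext (Prod.ext h1 h2)
  · rintro ⟨l, hl⟩
    rw [isSmall_iff] at hl
    obtain ⟨⟨hs, hnn, hsum⟩, hnf⟩ := hl
    have h0 : l.sum.2 = 0 := by rw [hsum]
    have h1 : l.sum.1 = 2 * (n : ℤ) := by rw [hsum]
    have hne : l ≠ [] := by
      intro hc
      rw [hc] at h1
      simp at h1
      omega
    obtain ⟨P, Q, ⟨hPs, hPn, hP0⟩, ⟨hQs, hQn, hQ0, hQf⟩, hx, heq⟩ :=
      surj_UD hs hnn h0 hnf hne
    refine ⟨⟨(P, Q), ⟨hPs, hPn, hP0⟩, ⟨hQs, hQn, hQ0, hQf⟩, by rw [hx, h1]⟩, ?_⟩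
    exact Subtype.ext heq.symm

noncomputable def eFlat (n : ℕ) :
    PairT n ≃ {l : List Pt // IsLargePath (0, 0) (2 * n, 0) l ∧ ¬ NF l} := by
  refine Equiv.ofBijective (fun x => ⟨x.1.1 ++ (2,0) :: x.1.2, ?_⟩) ⟨?_, ?_⟩
  · obtain ⟨⟨hPs, hPn, hP0⟩, ⟨hQs, hQn, hQ0, hQf⟩, hx⟩ := x.2
    obtain ⟨h1, h2, h3, h4⟩ := bridge_L hPs hPn hP0 hQs hQn hQ0
    rw [isLarge_iff]
    refine ⟨⟨h1, h2, ?_⟩, h4⟩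
    rw [h3, hx]
  · rintro ⟨⟨P, Q⟩, ⟨hPs, hPn, hP0⟩, ⟨hQs, hQn, hQ0, hQf⟩, hx⟩
      ⟨⟨P', Q'⟩, ⟨hPs', hPn', hP0'⟩, ⟨hQs', hQn', hQ0', hQf'⟩, hx'⟩ h
    simp only [Subtype.mk.injEq] at h
    obtain ⟨h1, h2⟩ := inj_L hP0 hP0' hQf hQf' h
    exact Subtype.ext (Prod.ext h1 h2)
  · rintro ⟨l, hl, hnf⟩
    rw [isLarge_iff] at hl
    obtain ⟨hs, hnn, hsum⟩ := hl
    have h0 : l.sum.2 = 0 := by rw [hsum]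
    have h1 : l.sum.1 = 2 * (n : ℤ) := by rw [hsum]
    obtain ⟨P, Q, ⟨hPs, hPn, hP0⟩, ⟨hQs, hQn, hQ0, hQf⟩, hx, heq⟩ :=
      surj_L hs hnn h0 hnf
    refine ⟨⟨(P, Q), ⟨hPs, hPn, hP0⟩, ⟨hQs, hQn, hQ0, hQf⟩, by rw [hx, h1]⟩, ?_⟩
    exact Subtype.ext heq.symm

end SchAux

/-- For `n ≥ 1`, the `n`-th large Schröder number is twice the `n`-th small one. -/
theorem large_eq_two_mul_small (n : ℕ) (hn : 1 ≤ n) :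
    schR n = 2 * schS n := by
  classical
  open SchAux in
  have eA : {x : {l : List Pt // IsLargePath (0, 0) (2 * n, 0) l} // SchAux.NF x.1} ≃
      {l : List Pt // IsSmallPath (0, 0) (2 * n, 0) l} :=
    (Equiv.subtypeSubtypeEquivSubtypeInter _ _).trans
      (Equiv.subtypeEquivRight fun l => by
        rw [SchAux.isSmall_iff, SchAux.isLarge_iff])
  have eB : {x : {l : List Pt // IsLargePath (0, 0) (2 * n, 0) l} // ¬ SchAux.NF x.1} ≃
      {l : List Pt // IsSmallPath (0, 0) (2 * n, 0) l} :=
    (Equiv.subtypeSubtypeEquivSubtypeInter _ _).trans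
      ((SchAux.eFlat n).symm.trans (SchAux.eSmall n hn))
  have e : {l : List Pt // IsLargePath (0, 0) (2 * n, 0) l} ≃
      Bool × {l : List Pt // IsSmallPath (0, 0) (2 * n, 0) l} :=
    ((Equiv.sumCompl (fun x : {l : List Pt // IsLargePath (0, 0) (2 * n, 0) l} =>
        SchAux.NF x.1)).symm.trans ((Equiv.sumCongr eA eB).trans
          (Equiv.boolProdEquivSum _).symm))
  have : schR n = Nat.card (Bool × {l : List Pt // IsSmallPath (0, 0) (2 * n, 0) l}) :=
    Nat.card_congr e
  rw [this, Nat.card_prod]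
  simp [schS, Nat.card_eq_fintype_card]
end

section
/- For n ≥ 2, there is a bijection between Π_{n-1} and Ω_n; in particular |Π_{n-1}| = |Ω_n|. -/
open Matrix

namespace SchAux

variable {p q v u : Pt} {l l₁ l₂ m : List Pt}

def Ok (l : List Pt) : Prop := ∀ s ∈ l, s = (1, 1) ∨ s = (1, -1) ∨ s = (2, 0)

lemma pts_nil : pts p [] = [p] := rfl

lemma pts_cons (s : Pt) : pts p (s :: l) = p :: pts (p + s) l := by
  simp [pts, List.scanl_cons]

lemma endpt_nil : endpt p [] = p := rfl

lemma endpt_cons (s : Pt) : endpt p (s :: l) = endpt (p + s) l := rfl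

lemma endpt_append : endpt p (l₁ ++ l₂) = endpt (endpt p l₁) l₂ := by
  simp [endpt, List.foldl_append]

lemma mem_pts_self : p ∈ pts p l := by
  cases l <;> simp [pts_nil, pts_cons]

lemma pts_ne_nil : pts p l ≠ [] := by
  cases l <;> simp [pts_nil, pts_cons]

lemma endpt_mem_pts : endpt p l ∈ pts p l := by
  induction l generalizing p with
  | nil => simp [pts_nil, endpt_nil]
  | cons s l ih => rw [pts_cons, endpt_cons]; exact List.mem_cons_of_mem _ (ih)

lemma pts_append : pts p (l₁ ++ l₂) = (pts p l₁).dropLast ++ pts (endpt p l₁) l₂ := by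
  induction l₁ generalizing p with
  | nil => simp [pts_nil, endpt_nil]
  | cons s l ih =>
      rw [List.cons_append, pts_cons, pts_cons, endpt_cons, ih,
        List.dropLast_cons_of_ne_nil pts_ne_nil, List.cons_append]

lemma pts_eq_concat : pts p l = (pts p l).dropLast ++ [endpt p l] := by
  induction l generalizing p with
  | nil => simp [pts_nil, endpt_nil]
  | cons s l ih =>
      rw [pts_cons, endpt_cons, List.dropLast_cons_of_ne_nil pts_ne_nil, List.cons_append]
      congr 1
      exact ih

lemma mem_pts_append_right (hv : v ∈ pts (endpt p l₁) l₂) : v ∈ pts p (l₁ ++ l₂) := by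
  rw [pts_append]; exact List.mem_append_right _ hv

lemma mem_pts_append_left (hv : v ∈ pts p l₁) : v ∈ pts p (l₁ ++ l₂) := by
  rw [pts_append]
  rw [pts_eq_concat] at hv
  rcases List.mem_append.mp hv with h | h
  · exact List.mem_append_left _ h
  · simp at h; subst h; exact List.mem_append_right _ mem_pts_self

lemma pts_shift (w : Pt) : pts (p + w) l = (pts p l).map (· + w) := by
  induction l generalizing p with
  | nil => simp [pts_nil]
  | cons s l ih =>
      rw [pts_cons, pts_cons, List.map_cons, show p + w + s = (p + s) + w by ring, ih]

lemma endpt_shift (w : Pt) : endpt (p + w) l = endpt p l + w := by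
  induction l generalizing p with
  | nil => simp [endpt_nil]
  | cons s l ih => rw [endpt_cons, endpt_cons, show p + w + s = (p + s) + w by ring, ih]

lemma Ok.tail (h : Ok (List.cons u l)) : Ok l := fun t ht => h t (List.mem_cons_of_mem _ ht)

lemma pts_x_bounds (hok : Ok l) : ∀ v ∈ pts p l, p.1 ≤ v.1 ∧ v.1 ≤ (endpt p l).1 := by
  induction l generalizing p with
  | nil => intro v hv; simp [pts_nil] at hv; simp [hv, endpt_nil]
  | cons s l ih =>
      intro v hv
      have hs1 : 1 ≤ s.1 := by rcases hok s (by simp) with h | h | h <;> simp [h]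
      rw [pts_cons] at hv
      rcases List.mem_cons.mp hv with rfl | hv
      · refine ⟨le_refl _, ?_⟩
        have := (ih hok.tail _ (endpt_mem_pts (p := v + s))).1
        rw [endpt_cons]
        simp [Prod.fst_add] at this ⊢; omega
      · have := ih hok.tail v hv
        rw [endpt_cons]
        simp [Prod.fst_add] at this ⊢; omega

lemma pts_x_unique (hok : Ok l) :
    ∀ v ∈ pts p l, ∀ u ∈ pts p l, v.1 = u.1 → v = u := by
  induction l generalizing p with
  | nil => intro v hv u hu _; simp [pts_nil] at hv hu; rw [hv, hu]
  | cons s l ih =>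
      intro v hv u hu hx
      have hs1 : 1 ≤ s.1 := by rcases hok s (by simp) with h | h | h <;> simp [h]
      rw [pts_cons] at hv hu
      have key : ∀ w ∈ pts (p + s) l, p.1 < w.1 := by
        intro w hw
        have := (pts_x_bounds hok.tail w hw).1
        simp [Prod.fst_add] at this; omega
      rcases List.mem_cons.mp hv with rfl | hv <;> rcases List.mem_cons.mp hu with rfl | hu
      · rfl
      · exact absurd hx (by have := key u hu; omega)
      · exact absurd hx (by have := key v hv; omega)
      · exact ih hok.tail v hv u hu hx

lemma pts_parity (hok : Ok l) :
    ∀ v ∈ pts p l, (v.1 + v.2) % 2 = (p.1 + p.2) % 2 := by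
  induction l generalizing p with
  | nil => intro v hv; simp [pts_nil] at hv; rw [hv]
  | cons s l ih =>
      intro v hv
      rw [pts_cons] at hv
      rcases List.mem_cons.mp hv with rfl | hv
      · rfl
      · have h2 := ih hok.tail v hv
        rcases hok s (by simp) with h | h | h <;>
          simp [h, Prod.fst_add, Prod.snd_add] at h2 <;> omega

lemma endpt_take_mem (k : ℕ) : endpt p (l.take k) ∈ pts p l := by
  have := mem_pts_append_left (l₂ := l.drop k)
    (endpt_mem_pts (p := p) (l := l.take k))
  rwa [List.take_append_drop] at this

lemma first_step (hs : IsSmallPath p q l) (hp : p.2 = 0) (hne : l ≠ []) :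
    ∃ r, l = (1, 1) :: r := by
  obtain ⟨s, r, rfl⟩ := List.exists_cons_of_ne_nil hne
  rcases hs.1.1 s (by simp) with h | h | h
  · exact ⟨r, by rw [h]⟩
  · exfalso
    have := hs.1.2.1 (p + s)
      (by rw [pts_cons]; exact List.mem_cons_of_mem _ mem_pts_self)
    rw [h] at this
    simp [Prod.snd_add] at this
    omega
  · exfalso
    have := hs.2 0 (by simp) (by simp [h])
    simp [endpt_nil] at this
    exact this hp

lemma last_step (hs : IsSmallPath p q l) (hq : q.2 = 0) (hne : l ≠ []) :
    ∃ m, l = m ++ [(1, -1)] ∧ endpt p m = (q.1 - 1, q.2 + 1) := by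
  rcases List.eq_nil_or_concat l with rfl | ⟨m, s, rfl⟩
  · exact absurd rfl hne
  rw [List.concat_eq_append] at *
  have hend : endpt p m + s = q := by
    have := hs.1.2.2
    rwa [endpt_append, endpt_cons, endpt_nil] at this
  have hmem : endpt p m ∈ pts p (m ++ [s]) := mem_pts_append_left endpt_mem_pts
  have hy := hs.1.2.1 _ hmem
  rcases hs.1.1 s (by simp) with h | h | h
  · exfalso
    subst h
    have : (endpt p m).2 + 1 = q.2 := by
      rw [← hend]; simp [Prod.snd_add]
    omega
  · subst h
    refine ⟨m, rfl, ?_⟩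
    have h1 : (endpt p m).1 + 1 = q.1 := by rw [← hend]; simp [Prod.fst_add]
    have h2 : (endpt p m).2 + (-1) = q.2 := by rw [← hend]; simp [Prod.snd_add]
    exact Prod.ext (by omega) (by omega)
  · exfalso
    have hlt : m.length < (m ++ [s]).length := by simp
    have hget : (m ++ [s]).get ⟨m.length, hlt⟩ = (2, 0) := by
      simp [List.get_eq_getElem, List.getElem_concat_length, h]
    have := hs.2 m.length hlt hget
    rw [List.take_append_of_le_length (le_refl _), List.take_length] at this
    have : (endpt p m).2 ≠ 0 := this
    have h2 : (endpt p m).2 + 0 = q.2 := by rw [← hend, h]; simp [Prod.snd_add]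
    omega

lemma omega_low {n : ℕ} {ω : Fin n → List Pt} (hω : ω ∈ OmegaSet n) (j : Fin n) :
    ((-(2 * (j : ℤ) + 1), 0) : Pt) ∈ pts (-(2 * (j : ℤ) + 1), 0) (ω j) ∧
    ((2 * (j : ℤ) + 1, 0) : Pt) ∈ pts (-(2 * (j : ℤ) + 1), 0) (ω j) ∧
    ((-(2 * (j : ℤ)), 1) : Pt) ∈ pts (-(2 * (j : ℤ) + 1), 0) (ω j) ∧
    ((2 * (j : ℤ), 1) : Pt) ∈ pts (-(2 * (j : ℤ) + 1), 0) (ω j) := by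
  have hs := hω.1 j
  have hne : ω j ≠ [] := by
    intro h
    have := hs.1.2.2
    rw [h, endpt_nil] at this
    rw [Prod.mk.injEq] at this
    omega
  refine ⟨mem_pts_self, ?_, ?_, ?_⟩
  · have := endpt_mem_pts (p := ((-(2 * (j : ℤ) + 1), 0) : Pt)) (l := ω j)
    rwa [hs.1.2.2] at this
  · obtain ⟨r, hr⟩ := first_step hs rfl hne
    rw [hr, pts_cons]
    refine List.mem_cons_of_mem _ ?_
    have : ((-(2 * (j : ℤ) + 1), 0) : Pt) + (1, 1) = (-(2 * (j : ℤ)), 1) := by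
      rw [Prod.mk_add_mk]; norm_num
    rw [← this]
    exact mem_pts_self
  · obtain ⟨m, hm, hend⟩ := last_step hs rfl hne
    rw [hm]
    have : ((2 * (j : ℤ), 1) : Pt) = endpt (-(2 * (j : ℤ) + 1), 0) m := by
      rw [hend]; norm_num
    rw [this]
    exact mem_pts_append_left endpt_mem_pts

lemma no_low {n : ℕ} {ω : Fin n → List Pt} (hω : ω ∈ OmegaSet n) (i : Fin n) :
    ∀ v ∈ pts (-(2 * (i : ℤ) + 1), 0) (ω i),
      (v.2 = 0 → v.1 = -(2 * (i : ℤ) + 1) ∨ v.1 = 2 * (i : ℤ) + 1) ∧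
      (v.2 = 1 → v.1 = -(2 * (i : ℤ)) ∨ v.1 = 2 * (i : ℤ)) := by
  intro v hv
  have hsmall := hω.1 i
  have hok : Ok (ω i) := hsmall.1.1
  have hb := pts_x_bounds hok v hv
  rw [hsmall.1.2.2] at hb
  simp only [Prod.fst] at hb
  have hpar := pts_parity hok v hv
  simp only [Prod.fst, Prod.snd] at hpar
  constructor
  · intro hv2
    by_contra hcon
    push_neg at hcon
    obtain ⟨k, hk, hkv⟩ : ∃ k : ℕ, k < (i : ℕ) ∧
        (v.1 = 2 * (k : ℤ) + 1 ∨ v.1 = -(2 * (k : ℤ) + 1)) := by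
      refine ⟨(v.1.natAbs - 1) / 2, ?_, ?_⟩ <;> omega
    set j : Fin n := ⟨k, lt_trans hk i.isLt⟩ with hj
    have hij : i ≠ j := by
      intro h
      rw [h] at hk
      exact absurd hk (by simp [hj])
    have hcj : ((j : ℤ)) = (k : ℤ) := by simp [hj]
    have hlow := omega_low hω j
    have hvj : v ∈ pts (-(2 * (j : ℤ) + 1), 0) (ω j) := by
      rcases hkv with h | h
      · have : v = ((2 * (j : ℤ) + 1, 0) : Pt) := by
          rw [Prod.ext_iff]; constructor
          · rw [h, hcj]
          · exact hv2
        rw [this]; exact hlow.2.1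
      · have : v = ((-(2 * (j : ℤ) + 1), 0) : Pt) := by
          rw [Prod.ext_iff]; constructor
          · rw [h, hcj]
          · exact hv2
        rw [this]; exact hlow.1
    exact hω.2 i j hij v hv hvj
  · intro hv2
    have hns : v.1 ≠ -(2 * (i : ℤ) + 1) := by
      intro h
      have := pts_x_unique hok v hv _ mem_pts_self h
      rw [this] at hv2
      simp at hv2
    have hne : v.1 ≠ 2 * (i : ℤ) + 1 := by
      intro h
      have hm := endpt_mem_pts (p := ((-(2 * (i : ℤ) + 1), 0) : Pt)) (l := ω i)
      rw [hsmall.1.2.2] at hm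
      have := pts_x_unique hok v hv _ hm h
      rw [this] at hv2
      simp at hv2
    by_contra hcon
    push_neg at hcon
    obtain ⟨k, hk, hkv⟩ : ∃ k : ℕ, k < (i : ℕ) ∧
        (v.1 = 2 * (k : ℤ) ∨ v.1 = -(2 * (k : ℤ))) := by
      refine ⟨v.1.natAbs / 2, ?_, ?_⟩ <;> omega
    set j : Fin n := ⟨k, lt_trans hk i.isLt⟩ with hj
    have hij : i ≠ j := by
      intro h
      rw [h] at hk
      exact absurd hk (by simp [hj])
    have hcj : ((j : ℤ)) = (k : ℤ) := by simp [hj]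
    have hlow := omega_low hω j
    have hvj : v ∈ pts (-(2 * (j : ℤ) + 1), 0) (ω j) := by
      rcases hkv with h | h
      · have : v = ((2 * (j : ℤ), 1) : Pt) := by
          rw [Prod.ext_iff]; exact ⟨by rw [h, hcj], hv2⟩
        rw [this]; exact hlow.2.2.2
      · have : v = ((-(2 * (j : ℤ)), 1) : Pt) := by
          rw [Prod.ext_iff]; exact ⟨by rw [h, hcj], hv2⟩
        rw [this]; exact hlow.2.2.1
    exact hω.2 i j hij v hv hvj

lemma mem_of_mid {p base : Pt} {m t : List Pt} (hb : base + (0, 2) = p + (1, 1) + (1, 1)) :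
    ∀ v ∈ pts base m, v + (0, 2) ∈ pts p ((1, 1) :: (1, 1) :: (m ++ t)) := by
  intro v hv
  rw [pts_cons, pts_cons]
  refine List.mem_cons_of_mem _ (List.mem_cons_of_mem _ (mem_pts_append_left ?_))
  rw [← hb, pts_shift]
  exact List.mem_map_of_mem hv

lemma omega_zero {n : ℕ} {ω : Fin n → List Pt} (hω : ω ∈ OmegaSet n) (i : Fin n)
    (hi : (i : ℕ) = 0) : ω i = [(1, 1), (1, -1)] := by
  have hI : (i : ℤ) = 0 := by exact_mod_cast congrArg (Nat.cast : ℕ → ℤ) hi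
  have hs := hω.1 i
  rw [hI] at hs
  norm_num at hs
  have hne : ω i ≠ [] := by
    intro h
    have := hs.1.2.2
    rw [h, endpt_nil, Prod.mk.injEq] at this
    omega
  obtain ⟨r, hr⟩ := first_step hs rfl hne
  have hq : endpt ((-1 : ℤ), (0 : ℤ)) (ω i) = (1, 0) := hs.1.2.2
  rw [hr, endpt_cons] at hq
  have hp1 : ((-1 : ℤ), (0 : ℤ)) + (1, 1) = ((0 : ℤ), (1 : ℤ)) := by
    rw [Prod.mk_add_mk]; norm_num
  rw [hp1] at hq
  have hokr : Ok r := fun s h => hs.1.1 s (by rw [hr]; exact List.mem_cons_of_mem _ h)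
  rcases r with _ | ⟨t, r'⟩
  · rw [endpt_nil, Prod.mk.injEq] at hq; omega
  have hokr' : Ok r' := hokr.tail
  rw [endpt_cons] at hq
  have hxb := pts_x_bounds hokr' _ (mem_pts_self (p := (0, 1) + t) (l := r'))
  rw [hq] at hxb
  rcases hokr t (by simp) with ht | ht | ht
  · exfalso
    rw [ht] at hq
    have h1 : ((0 : ℤ), (1 : ℤ)) + (1, 1) = ((1 : ℤ), (2 : ℤ)) := by
      rw [Prod.mk_add_mk]; norm_num
    rw [h1] at hq
    have hmemE : ((1 : ℤ), (0 : ℤ)) ∈ pts ((1 : ℤ), (2 : ℤ)) r' := by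
      rw [← hq]; exact endpt_mem_pts
    have := pts_x_unique hokr' _ (mem_pts_self (p := ((1 : ℤ), (2 : ℤ))) (l := r')) _
      hmemE rfl
    rw [Prod.mk.injEq] at this
    omega
  · have h1 : ((0 : ℤ), (1 : ℤ)) + (1, -1) = ((1 : ℤ), (0 : ℤ)) := by
      rw [Prod.mk_add_mk]; norm_num
    rw [ht] at hq hr
    rw [h1] at hq
    rcases r' with _ | ⟨u, r''⟩
    · exact hr
    exfalso
    have hu1 : 1 ≤ u.1 := by
      rcases hokr' u (by simp) with h | h | h <;> simp [h]
    rw [endpt_cons] at hq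
    have h2 := (pts_x_bounds hokr'.tail _
      (endpt_mem_pts (p := ((1 : ℤ), (0 : ℤ)) + u) (l := r''))).1
    rw [hq] at h2
    simp [Prod.fst_add] at h2
    omega
  · exfalso
    rw [ht] at hxb
    have h1 : ((0 : ℤ), (1 : ℤ)) + (2, 0) = ((2 : ℤ), (1 : ℤ)) := by
      rw [Prod.mk_add_mk]; norm_num
    rw [h1] at hxb
    simp at hxb

lemma omega_succ {n : ℕ} {ω : Fin n → List Pt} (hω : ω ∈ OmegaSet n) (i : Fin n)
    (hi : 0 < (i : ℕ)) :
    ∃ m, ω i = (1, 1) :: (1, 1) :: (m ++ [(1, -1), (1, -1)]) ∧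
      IsLargePath (-(2 * (i : ℤ) - 1), 0) (2 * (i : ℤ) - 1, 0) m := by
  have hI : 1 ≤ (i : ℤ) := by exact_mod_cast hi
  set I : ℤ := (i : ℤ) with hIdef
  have hs := hω.1 i
  have hlow := no_low hω i
  have hok : Ok (ω i) := hs.1.1
  set p : Pt := (-(2 * I + 1), 0) with hp
  have hne : ω i ≠ [] := by
    intro h
    have := hs.1.2.2
    rw [h, endpt_nil, hp, Prod.mk.injEq] at this
    omega
  obtain ⟨r, hr⟩ := first_step hs rfl hne
  have hQ1 : p + (1, 1) = (-2 * I, 1) := by rw [hp, Prod.mk_add_mk]; ring_nf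
  rcases r with _ | ⟨s, r₂⟩
  · exfalso
    have := hs.1.2.2
    rw [hr, endpt_cons, endpt_nil, hQ1, Prod.mk.injEq] at this
    omega
  have hsm : s ∈ ω i := by rw [hr]; simp
  have hq2 : p + (1, 1) + s ∈ pts p (ω i) := by
    rw [hr, pts_cons, pts_cons]
    exact List.mem_cons_of_mem _ (List.mem_cons_of_mem _ mem_pts_self)
  have hsU : s = (1, 1) := by
    rcases hok s hsm with h | h | h
    · exact h
    · exfalso
      rw [h, hQ1] at hq2
      have h1 : ((-2 * I : ℤ), (1 : ℤ)) + (1, -1) = (-2 * I + 1, 0) := by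
        rw [Prod.mk_add_mk]; norm_num
      rw [h1] at hq2
      have := (hlow _ hq2).1 rfl
      simp at this
      omega
    · exfalso
      rw [h, hQ1] at hq2
      have h1 : ((-2 * I : ℤ), (1 : ℤ)) + (2, 0) = (-2 * I + 2, 1) := by
        rw [Prod.mk_add_mk]; norm_num
      rw [h1] at hq2
      have := (hlow _ hq2).2 rfl
      simp at this
      omega
  subst hsU
  set Q : Pt := p + (1, 1) + (1, 1) with hQdef
  have hQ : Q = (-2 * I + 1, 2) := by rw [hQdef, hQ1, Prod.mk_add_mk]; norm_num
  -- decompose r₂ = m ++ [t₂, t]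
  obtain ⟨m, t₂, t, hm⟩ : ∃ m t₂ t, r₂ = m ++ [t₂, t] := by
    rcases List.eq_nil_or_concat r₂ with h | ⟨m₁, t, h⟩
    · exfalso
      rw [h] at hr
      have := hs.1.2.2
      rw [hr, endpt_cons, endpt_cons, endpt_nil, ← hQdef, hQ, Prod.mk.injEq] at this
      omega
    rw [List.concat_eq_append] at h
    rcases List.eq_nil_or_concat m₁ with h1 | ⟨m, t₂, h1⟩
    · exfalso
      rw [h1] at h
      rw [h] at hr
      have ht : t ∈ ω i := by rw [hr]; simp
      have := hs.1.2.2
      rw [hr] at this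
      simp only [List.nil_append] at this
      rw [endpt_cons, endpt_cons, ← hQdef, endpt_cons, endpt_nil, hQ] at this
      rcases hok t ht with h2 | h2 | h2 <;> rw [h2, Prod.mk_add_mk, Prod.mk.injEq] at this <;>
        omega
    rw [List.concat_eq_append] at h1
    exact ⟨m, t₂, t, by rw [h, h1, List.append_assoc]; rfl⟩
  rw [hm] at hr
  have hokm : Ok m := by
    intro u hu
    exact hok u (by rw [hr]; simp [hu])
  set e : Pt := endpt Q m with he
  have hendl : endpt p (ω i) = e + t₂ + t := by
    rw [hr, endpt_cons, endpt_cons, ← hQdef,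
      show m ++ [t₂, t] = (m ++ [t₂]) ++ [t] by simp,
      endpt_append, endpt_append, endpt_cons, endpt_nil, endpt_cons, endpt_nil, ← he]
  have hsum : e + t₂ + t = (2 * I + 1, 0) := by rw [← hendl]; exact hs.1.2.2
  have hem : e ∈ pts p (ω i) := by
    rw [hr, pts_cons, pts_cons, ← hQdef]
    exact List.mem_cons_of_mem _ (List.mem_cons_of_mem _
      (mem_pts_append_left endpt_mem_pts))
  have he2m : e + t₂ ∈ pts p (ω i) := by
    rw [hr, pts_cons, pts_cons, ← hQdef,
      show m ++ [t₂, t] = (m ++ [t₂]) ++ [t] by simp]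
    refine List.mem_cons_of_mem _ (List.mem_cons_of_mem _ (mem_pts_append_left ?_))
    rw [show e + t₂ = endpt Q (m ++ [t₂]) by
      rw [endpt_append, endpt_cons, endpt_nil, he]]
    exact endpt_mem_pts
  have htm : t ∈ ω i := by rw [hr]; simp
  have ht₂m : t₂ ∈ ω i := by rw [hr]; simp
  have hey := hs.1.2.1 e hem
  have he2y := hs.1.2.1 _ he2m
  have htD : t = (1, -1) := by
    rcases hok t htm with h | h | h
    · exfalso
      rw [h] at hsum
      have h2 := congrArg Prod.snd hsum
      simp only [Prod.snd_add] at h2 he2y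
      norm_num at h2 ⊢
      omega
    · exact h
    · exfalso
      rw [h] at hsum
      have h0 : e + t₂ = (2 * I - 1, 0) := by
        rw [Prod.ext_iff] at hsum ⊢
        simp [Prod.fst_add, Prod.snd_add] at hsum ⊢
        omega
      rw [h0] at he2m
      have := (hlow _ he2m).1 rfl
      simp at this
      omega
  subst htD
  have he2 : e + t₂ = (2 * I, 1) := by
    rw [Prod.ext_iff] at hsum ⊢
    simp [Prod.fst_add, Prod.snd_add] at hsum ⊢
    omega
  have ht₂D : t₂ = (1, -1) := by
    rcases hok t₂ ht₂m with h | h | h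
    · exfalso
      rw [h] at he2
      have h0 : e = (2 * I - 1, 0) := by
        rw [Prod.ext_iff] at he2 ⊢
        simp [Prod.fst_add, Prod.snd_add] at he2 ⊢
        omega
      rw [h0] at hem
      have := (hlow _ hem).1 rfl
      simp at this
      omega
    · exact h
    · exfalso
      rw [h] at he2
      have h0 : e = (2 * I - 2, 1) := by
        rw [Prod.ext_iff] at he2 ⊢
        simp [Prod.fst_add, Prod.snd_add] at he2 ⊢
        omega
      rw [h0] at hem
      have := (hlow _ hem).2 rfl
      simp at this
      omega
  subst ht₂D
  have heval : e = (2 * I - 1, 2) := by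
    rw [Prod.ext_iff] at he2 ⊢
    simp [Prod.fst_add, Prod.snd_add] at he2 ⊢
    omega
  refine ⟨m, hr, ?_, ?_, ?_⟩
  · intro u hu
    exact hokm u hu
  · -- heights in middle
    intro v hv
    set base : Pt := (-(2 * I - 1), 0) with hbase
    have hshift : base + (0, 2) = Q := by
      rw [hbase, hQ, Prod.mk_add_mk, Prod.mk.injEq]
      omega
    have hv2 : v + (0, 2) ∈ pts Q m := by
      rw [← hshift, pts_shift]
      exact List.mem_map_of_mem hv
    have hmem : v + (0, 2) ∈ pts p (ω i) := by
      rw [hr, pts_cons, pts_cons, ← hQdef]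
      exact List.mem_cons_of_mem _ (List.mem_cons_of_mem _
        (mem_pts_append_left hv2))
    have hy : (0 : ℤ) ≤ (v + (0, 2)).2 := hs.1.2.1 _ hmem
    have hxb := pts_x_bounds hokm _ hv2
    rw [← he, heval, hQ] at hxb
    have hxb1 : -2 * I + 1 ≤ (v + (0, 2)).1 := hxb.1
    have hxb2 : (v + (0, 2)).1 ≤ 2 * I - 1 := hxb.2
    have hlow1 := (hlow _ hmem).1
    have hlow2 := (hlow _ hmem).2
    have hvy : (v + (0, 2)).2 = v.2 + 2 := by simp [Prod.snd_add]
    have hvx : (v + (0, 2)).1 = v.1 := by simp [Prod.fst_add]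
    by_contra hneg
    push_neg at hneg
    have h01 : (v + (0, 2)).2 = 0 ∨ (v + (0, 2)).2 = 1 := by omega
    rcases h01 with h | h
    · rcases hlow1 h with h2 | h2 <;> omega
    · rcases hlow2 h with h2 | h2 <;> omega
  · have : endpt ((-(2 * I - 1), 0) : Pt) m = endpt (Q + (0, -2)) m := by
      congr 1
      rw [hQ, Prod.mk_add_mk, Prod.mk.injEq]
      omega
    rw [this, endpt_shift, ← he, heval, Prod.mk_add_mk, Prod.mk.injEq]
    omega

def Fmap (n : ℕ) (π : Fin (n - 1) → List Pt) (i : Fin n) : List Pt :=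
  if _ : (i : ℕ) = 0 then [(1, 1), (1, -1)]
  else (1, 1) :: (1, 1) ::
    (π ⟨(i : ℕ) - 1, by have := i.isLt; omega⟩ ++ [(1, -1), (1, -1)])

def Gmap (n : ℕ) (ω : Fin n → List Pt) (j : Fin (n - 1)) : List Pt :=
  (((ω ⟨(j : ℕ) + 1, by have := j.isLt; omega⟩).drop 2).dropLast).dropLast

lemma dropLast_two (m : List Pt) (a b : Pt) : ((m ++ [a, b]).dropLast).dropLast = m := by
  rw [show m ++ [a, b] = (m ++ [a]) ++ [b] by simp, List.dropLast_concat, List.dropLast_concat]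

lemma mem_pts_block {p v : Pt} {m : List Pt} :
    v ∈ pts p ((1, 1) :: (1, 1) :: (m ++ [(1, -1), (1, -1)])) ↔
      v = p ∨ v = p + (1, 1) ∨ v ∈ pts (p + (1, 1) + (1, 1)) m ∨
      v = endpt (p + (1, 1) + (1, 1)) m + (1, -1) ∨
      v = endpt (p + (1, 1) + (1, 1)) m + (1, -1) + (1, -1) := by
  have hsplit : v ∈ pts (p + (1, 1) + (1, 1)) m ↔
      v ∈ (pts (p + (1, 1) + (1, 1)) m).dropLast ∨ v = endpt (p + (1, 1) + (1, 1)) m := by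
    constructor
    · intro h
      rw [pts_eq_concat] at h
      rcases List.mem_append.mp h with h | h
      · exact Or.inl h
      · simp at h; exact Or.inr h
    · rintro (h | h)
      · exact (List.dropLast_sublist _).subset h
      · rw [h]; exact endpt_mem_pts
  rw [pts_cons, pts_cons, pts_append, hsplit]
  simp only [List.mem_cons, List.mem_append, pts_cons, pts_nil, List.mem_singleton,
    List.not_mem_nil, or_false]
  tauto

lemma pts_UD : pts ((-1 : ℤ), (0 : ℤ)) [(1, 1), (1, -1)] = [(-1, 0), (0, 1), (1, 0)] := by
  rw [pts_cons, pts_cons, pts_nil, Prod.mk_add_mk, Prod.mk_add_mk]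
  norm_num

lemma small_UD : IsSmallPath ((-1 : ℤ), (0 : ℤ)) (1, 0) [(1, 1), (1, -1)] := by
  refine ⟨⟨?_, ?_, ?_⟩, ?_⟩
  · intro s hs; simp at hs; rcases hs with h | h <;> simp [h]
  · intro v hv
    rw [pts_UD] at hv
    simp at hv
    rcases hv with h | h | h <;> simp [h]
  · rw [endpt_cons, endpt_cons, endpt_nil, Prod.mk_add_mk, Prod.mk_add_mk]
    norm_num
  · intro k hk hget
    simp at hk
    interval_cases k <;>
      simp only [List.get_eq_getElem, List.getElem_cons_zero, List.getElem_cons_succ,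
        Prod.mk.injEq] at hget <;> omega

lemma block_small {b q : Pt} {m : List Pt} (hm : IsLargePath b q m) (hb : b.2 = 0)
    (hq : q.2 = 0) (p : Pt) (hp : p + (1, 1) + (1, 1) = b + (0, 2)) :
    IsSmallPath p (q + (2, 0)) ((1, 1) :: (1, 1) :: (m ++ [(1, -1), (1, -1)])) := by
  have hendm : endpt (p + (1, 1) + (1, 1)) m = q + (0, 2) := by
    rw [hp, endpt_shift, hm.2.2]
  refine ⟨⟨?_, ?_, ?_⟩, ?_⟩
  · intro s hs
    simp only [List.mem_cons, List.mem_append, List.not_mem_nil, or_false] at hs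
    have h1 := hm.1 s
    tauto
  · intro v hv
    rw [mem_pts_block] at hv
    rcases hv with h | h | h | h | h
    · have := congrArg Prod.snd hp
      simp [Prod.snd_add] at this
      rw [h]; omega
    · rw [h]; simp [Prod.snd_add]
      have := congrArg Prod.snd hp
      simp [Prod.snd_add] at this
      omega
    · rw [hp, pts_shift] at h
      obtain ⟨u, hu, rfl⟩ := List.mem_map.mp h
      have := hm.2.1 u hu
      simp [Prod.snd_add]
      omega
    · rw [h, hendm]
      simp [Prod.snd_add]
      omega
    · rw [h, hendm]
      simp [Prod.snd_add]
      omega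
  · rw [endpt_cons, endpt_cons, endpt_append, hendm, endpt_cons, endpt_cons, endpt_nil]
    refine Prod.ext ?_ ?_ <;> simp [Prod.fst_add, Prod.snd_add] <;> omega
  · intro k hk hget
    rw [List.get_eq_getElem] at hget
    match k, hk with
    | 0, _ =>
      simp only [List.getElem_cons_zero, Prod.mk.injEq] at hget
      omega
    | 1, _ =>
      simp only [List.getElem_cons_succ, List.getElem_cons_zero, Prod.mk.injEq] at hget
      omega
    | (k + 2), hk =>
      simp only [List.getElem_cons_succ] at hget
      simp only [List.length_cons] at hk
      by_cases hkm : k < m.length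
      · have hget' : m[k]'hkm = (2, 0) := by
          rwa [List.getElem_append_left hkm] at hget
        have htake : (((1, 1) : Pt) :: (1, 1) :: (m ++ [(1, -1), (1, -1)])).take (k + 2)
            = (1, 1) :: (1, 1) :: m.take k := by
          rw [List.take_succ_cons, List.take_succ_cons,
            List.take_append_of_le_length (by omega)]
        rw [htake, endpt_cons, endpt_cons, hp, endpt_shift]
        have := hm.2.1 (endpt b (m.take k)) (endpt_take_mem k)
        simp [Prod.snd_add]
        omega
      · exfalso
        have hlen : k < m.length + 2 := by
          simp at hk; omega
        have : (m ++ [((1 : ℤ), (-1 : ℤ)), (1, -1)])[k]'(by simp; omega) = (1, -1) := by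
          rw [List.getElem_append_right (by omega)]
          have h2 : k - m.length = 0 ∨ k - m.length = 1 := by omega
          rcases h2 with h2 | h2 <;> simp [h2]
        rw [this] at hget
        simp at hget

lemma Fmap_pos {n : ℕ} (π : Fin (n - 1) → List Pt) (i : Fin n) (j : Fin (n - 1))
    (hj : (j : ℕ) + 1 = (i : ℕ)) :
    Fmap n π i = (1, 1) :: (1, 1) :: (π j ++ [(1, -1), (1, -1)]) := by
  have hi0 : (i : ℕ) ≠ 0 := by omega
  have hidx : (⟨(i : ℕ) - 1, by have := i.isLt; omega⟩ : Fin (n - 1)) = j :=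
    Fin.ext (by simp; omega)
  simp only [Fmap]
  rw [dif_neg hi0, hidx]

lemma Fmap_profile {n : ℕ} {π : Fin (n - 1) → List Pt} (hπ : π ∈ PiSet (n - 1))
    (i : Fin n) (j : Fin (n - 1)) (hj : (j : ℕ) + 1 = (i : ℕ)) :
    ∀ v ∈ pts (-(2 * (i : ℤ) + 1), 0) (Fmap n π i),
      (2 ≤ v.2 ∧ v + (0, -2) ∈ pts (-(2 * (j : ℤ) + 1), 0) (π j)) ∨
      v = (-(2 * (i : ℤ) + 1), 0) ∨ v = (-(2 * (i : ℤ)), 1) ∨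
      v = (2 * (i : ℤ), 1) ∨ v = (2 * (i : ℤ) + 1, 0) := by
  have hcast : (j : ℤ) + 1 = (i : ℤ) := by exact_mod_cast hj
  set p : Pt := (-(2 * (i : ℤ) + 1), 0) with hpdef
  have hp : p + (1, 1) + (1, 1) = ((-(2 * (j : ℤ) + 1), 0) : Pt) + (0, 2) := by
    rw [hpdef, Prod.mk_add_mk, Prod.mk_add_mk, Prod.mk_add_mk, Prod.mk.injEq]
    omega
  have hendm : endpt (p + (1, 1) + (1, 1)) (π j) = (2 * (j : ℤ) + 1, 2) := by
    rw [hp, endpt_shift, (hπ.1 j).2.2, Prod.mk_add_mk]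
    norm_num
  intro v hv
  rw [Fmap_pos π i j hj, mem_pts_block] at hv
  rcases hv with h | h | h | h | h
  · right; left; exact h
  · right; right; left
    rw [h, hpdef, Prod.mk_add_mk, Prod.mk.injEq]
    omega
  · left
    rw [hp, pts_shift] at h
    obtain ⟨u, hu, rfl⟩ := List.mem_map.mp h
    have hy := (hπ.1 j).2.1 u hu
    refine ⟨by simp [Prod.snd_add]; omega, ?_⟩
    have huu : u + (0, 2) + (0, -2) = u := by
      refine Prod.ext ?_ ?_ <;> simp
    rw [huu]
    exact hu
  · right; right; right; left
    rw [h, hendm, Prod.mk_add_mk, Prod.mk.injEq]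
    omega
  · right; right; right; right
    rw [h, hendm, Prod.mk_add_mk, Prod.mk_add_mk, Prod.mk.injEq]
    omega

lemma Fmap_zero_pts {n : ℕ} {π : Fin (n - 1) → List Pt} (i : Fin n) (hi : (i : ℕ) = 0)
    {v : Pt} (hv : v ∈ pts (-(2 * (i : ℤ) + 1), 0) (Fmap n π i)) :
    v = ((-1 : ℤ), (0 : ℤ)) ∨ v = (0, 1) ∨ v = (1, 0) := by
  have hiz : (i : ℤ) = 0 := by exact_mod_cast hi
  simp only [Fmap] at hv
  rw [dif_pos hi] at hv
  rw [show ((-(2 * (i : ℤ) + 1), 0) : Pt) = ((-1 : ℤ), (0 : ℤ)) by rw [hiz]; norm_num,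
    pts_UD] at hv
  simpa using hv

lemma Fmap_mem {n : ℕ} {π : Fin (n - 1) → List Pt} (hπ : π ∈ PiSet (n - 1)) :
    Fmap n π ∈ OmegaSet n := by
  constructor
  · intro i
    by_cases hi : (i : ℕ) = 0
    · have hiz : (i : ℤ) = 0 := by exact_mod_cast hi
      simp only [Fmap]
      rw [dif_pos hi]
      rw [show ((-(2 * (i : ℤ) + 1), 0) : Pt) = ((-1 : ℤ), (0 : ℤ)) by rw [hiz]; norm_num,
        show ((2 * (i : ℤ) + 1, 0) : Pt) = ((1 : ℤ), (0 : ℤ)) by rw [hiz]; norm_num]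
      exact small_UD
    · set j : Fin (n - 1) := ⟨(i : ℕ) - 1, by have := i.isLt; omega⟩ with hjdef
      have hj1 : (j : ℕ) + 1 = (i : ℕ) := by
        simp only [hjdef]
        omega
      have hcast : (j : ℤ) + 1 = (i : ℤ) := by exact_mod_cast hj1
      rw [Fmap_pos π i j hj1]
      have hp : ((-(2 * (i : ℤ) + 1), 0) : Pt) + (1, 1) + (1, 1)
          = ((-(2 * (j : ℤ) + 1), 0) : Pt) + (0, 2) := by
        rw [Prod.mk_add_mk, Prod.mk_add_mk, Prod.mk_add_mk, Prod.mk.injEq]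
        omega
      have := block_small (hπ.1 j) rfl rfl _ hp
      rwa [show ((2 * (j : ℤ) + 1, 0) : Pt) + (2, 0) = ((2 * (i : ℤ) + 1, 0) : Pt) by
        rw [Prod.mk_add_mk, Prod.mk.injEq]; omega] at this
  · have key : ∀ a c : Fin n, (a : ℕ) < (c : ℕ) → ∀ v,
        v ∈ pts (-(2 * (a : ℤ) + 1), 0) (Fmap n π a) →
        v ∈ pts (-(2 * (c : ℤ) + 1), 0) (Fmap n π c) → False := by
      intro a c hac v hva hvc
      have hc0 : (c : ℕ) ≠ 0 := by omega
      set jc : Fin (n - 1) := ⟨(c : ℕ) - 1, by have := c.isLt; omega⟩ with hjc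
      have hjc1 : (jc : ℕ) + 1 = (c : ℕ) := by simp only [hjc]; omega
      have hccast : (jc : ℤ) + 1 = (c : ℤ) := by exact_mod_cast hjc1
      have hpc := Fmap_profile hπ c jc hjc1 v hvc
      by_cases ha0 : (a : ℕ) = 0
      · have hacast : (a : ℤ) = 0 := by exact_mod_cast ha0
        have haclt : 1 ≤ (c : ℤ) := by exact_mod_cast Nat.one_le_iff_ne_zero.mpr hc0
        have hpa := Fmap_zero_pts a ha0 hva
        rcases hpa with rfl | rfl | rfl <;>
          rcases hpc with ⟨hy2, hmem⟩ | h | h | h | h <;>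
          first
            | simp at hy2
            | (rw [Prod.mk.injEq] at h; omega)
      · set ja : Fin (n - 1) := ⟨(a : ℕ) - 1, by have := a.isLt; omega⟩ with hja
        have hja1 : (ja : ℕ) + 1 = (a : ℕ) := by simp only [hja]; omega
        have hacast : (ja : ℤ) + 1 = (a : ℤ) := by exact_mod_cast hja1
        have hpa := Fmap_profile hπ a ja hja1 v hva
        have hjne : ja ≠ jc := by
          intro h
          have h2 : (ja : ℕ) = (jc : ℕ) := congrArg Fin.val h
          omega
        have hacint : (a : ℤ) < (c : ℤ) := by exact_mod_cast hac
        rcases hpa with ⟨hy2, hmema⟩ | ha | ha | ha | ha <;>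
          rcases hpc with ⟨hy2c, hmemc⟩ | hc | hc | hc | hc <;>
          first
            | exact hπ.2 ja jc hjne _ hmema hmemc
            | (rw [hc] at hy2; simp at hy2)
            | (rw [ha] at hy2c; simp at hy2c)
            | (rw [ha] at hc; rw [Prod.mk.injEq] at hc; omega)
    intro a c hac v hva hvc
    rcases Nat.lt_or_ge (a : ℕ) (c : ℕ) with h | h
    · exact key a c h v hva hvc
    · have h2 : (c : ℕ) < (a : ℕ) := by
        rcases Nat.lt_or_ge (c : ℕ) (a : ℕ) with h2 | h2
        · exact h2
        · exact absurd (Fin.ext (by omega)) hac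
      exact key c a h2 v hvc hva

lemma Gmap_eq {n : ℕ} {ω : Fin n → List Pt} (hω : ω ∈ OmegaSet n) (j : Fin (n - 1)) :
    ∃ (i : Fin n) (m : List Pt), (i : ℕ) = (j : ℕ) + 1 ∧ Gmap n ω j = m ∧
      ω i = (1, 1) :: (1, 1) :: (m ++ [(1, -1), (1, -1)]) ∧
      IsLargePath (-(2 * (j : ℤ) + 1), 0) (2 * (j : ℤ) + 1, 0) m := by
  refine ⟨⟨(j : ℕ) + 1, by have := j.isLt; omega⟩, ?_⟩
  set i : Fin n := ⟨(j : ℕ) + 1, by have := j.isLt; omega⟩ with hidef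
  obtain ⟨m, hm, hlarge⟩ := omega_succ hω i (by simp [hidef])
  have hcast : (i : ℤ) = (j : ℤ) + 1 := by
    simp only [hidef]
    push_cast
    ring
  refine ⟨m, rfl, ?_, hm, ?_⟩
  · have hGm : Gmap n ω j = ((ω i).drop 2).dropLast.dropLast := rfl
    rw [hGm, hm]
    simp only [List.drop_succ_cons, List.drop_zero]
    exact dropLast_two m _ _
  · have e1 : ((-(2 * (j : ℤ) + 1), 0) : Pt) = ((-(2 * (i : ℤ) - 1), 0) : Pt) := by
      rw [hcast, Prod.mk.injEq]
      omega
    have e2 : ((2 * (j : ℤ) + 1, 0) : Pt) = ((2 * (i : ℤ) - 1, 0) : Pt) := by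
      rw [hcast, Prod.mk.injEq]
      omega
    rw [e1, e2]
    exact hlarge

lemma Gmap_mem {n : ℕ} {ω : Fin n → List Pt} (hω : ω ∈ OmegaSet n) :
    Gmap n ω ∈ PiSet (n - 1) := by
  constructor
  · intro j
    obtain ⟨i, m, hi, hG, hm, hlarge⟩ := Gmap_eq hω j
    rw [hG]
    exact hlarge
  · intro j k hjk v hvj hvk
    obtain ⟨ij, mj, hij, hGj, hmj, _⟩ := Gmap_eq hω j
    obtain ⟨ik, mk, hik, hGk, hmk, _⟩ := Gmap_eq hω k
    rw [hGj] at hvj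
    rw [hGk] at hvk
    have hcj : (ij : ℤ) = (j : ℤ) + 1 := by exact_mod_cast congrArg (Nat.cast : ℕ → ℤ) hij
    have hck : (ik : ℤ) = (k : ℤ) + 1 := by exact_mod_cast congrArg (Nat.cast : ℕ → ℤ) hik
    have h1 : v + (0, 2) ∈ pts (-(2 * (ij : ℤ) + 1), 0) (ω ij) := by
      rw [hmj]
      refine mem_of_mid ?_ v hvj
      rw [hcj, Prod.mk_add_mk, Prod.mk_add_mk, Prod.mk_add_mk, Prod.mk.injEq]
      omega
    have h2 : v + (0, 2) ∈ pts (-(2 * (ik : ℤ) + 1), 0) (ω ik) := by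
      rw [hmk]
      refine mem_of_mid ?_ v hvk
      rw [hck, Prod.mk_add_mk, Prod.mk_add_mk, Prod.mk_add_mk, Prod.mk.injEq]
      omega
    have hne : ij ≠ ik := by
      intro h
      have h3 : (ij : ℕ) = (ik : ℕ) := congrArg Fin.val h
      exact hjk (Fin.ext (by omega))
    exact hω.2 ij ik hne _ h1 h2

lemma Gmap_Fmap {n : ℕ} (π : Fin (n - 1) → List Pt) : Gmap n (Fmap n π) = π := by
  funext j
  have h0 : Gmap n (Fmap n π) j
      = ((Fmap n π ⟨(j : ℕ) + 1, by have := j.isLt; omega⟩).drop 2).dropLast.dropLast := rfl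
  rw [h0, Fmap_pos π _ j (by simp)]
  simp only [List.drop_succ_cons, List.drop_zero]
  exact dropLast_two _ _ _

lemma Fmap_Gmap {n : ℕ} {ω : Fin n → List Pt} (hω : ω ∈ OmegaSet n) :
    Fmap n (Gmap n ω) = ω := by
  funext i
  by_cases hi : (i : ℕ) = 0
  · simp only [Fmap]
    rw [dif_pos hi]
    exact (omega_zero hω i hi).symm
  · set j : Fin (n - 1) := ⟨(i : ℕ) - 1, by have := i.isLt; omega⟩ with hjdef
    have hj1 : (j : ℕ) + 1 = (i : ℕ) := by simp only [hjdef]; omega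
    rw [Fmap_pos _ i j hj1]
    obtain ⟨i', m, hi', hG, hm, _⟩ := Gmap_eq hω j
    have hii : i' = i := Fin.ext (by omega)
    rw [hii] at hm
    rw [hG, ← hm]

end SchAux


/-- For `n ≥ 2`, there is a bijection between `Π_{n-1}` and `Ω_n`;
in particular `|Π_{n-1}| = |Ω_n|`. -/
theorem pi_equiv_omega (n : ℕ) (hn : 2 ≤ n) :
    Nonempty (↥(PiSet (n - 1)) ≃ ↥(OmegaSet n)) ∧
      Nat.card ↥(PiSet (n - 1)) = Nat.card ↥(OmegaSet n) := by
  have e : ↥(PiSet (n - 1)) ≃ ↥(OmegaSet n) :=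
    { toFun := fun x => ⟨SchAux.Fmap n x.1, SchAux.Fmap_mem x.2⟩
      invFun := fun y => ⟨SchAux.Gmap n y.1, SchAux.Gmap_mem y.2⟩
      left_inv := fun x => Subtype.ext (SchAux.Gmap_Fmap x.1)
      right_inv := fun y => Subtype.ext (SchAux.Fmap_Gmap y.2) }
  exact ⟨⟨e⟩, Nat.card_congr e⟩
end

section
/- For n ≥ 1, the determinant of the n×n Hankel matrix G_n^{(1)} = [s_{i+j-1}]_{1≤i,j≤n} of small Schröder numbers equals the number |Ω_n| of n-tuples of non-intersecting small Schröder paths, where ω_i goes from (-2i+1,0) to (2i-1,0). -/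
open Matrix

@[simp] lemma pts_nil (p : Pt) : pts p [] = [p] := rfl
@[simp] lemma pts_cons (p s : Pt) (l : List Pt) : pts p (s :: l) = p :: pts (p + s) l := by
  simp [pts, List.scanl_cons]
@[simp] lemma endpt_nil (p : Pt) : endpt p [] = p := rfl
@[simp] lemma endpt_cons (p s : Pt) (l : List Pt) : endpt p (s :: l) = endpt (p + s) l := rfl

lemma endpt_append (p : Pt) (l₁ l₂ : List Pt) :
    endpt p (l₁ ++ l₂) = endpt (endpt p l₁) l₂ := by
  simp [endpt, List.foldl_append]

lemma pts_append (p : Pt) (l₁ l₂ : List Pt) :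
    pts p (l₁ ++ l₂) = pts p l₁ ++ (pts (endpt p l₁) l₂).tail := by
  induction l₁ generalizing p with
  | nil => cases l₂ <;> simp [pts, endpt]
  | cons s l ih => simp [pts_cons, ih]

lemma pts_ne_nil (p : Pt) (l : List Pt) : pts p l ≠ [] := by
  cases l <;> simp [pts]

@[simp] lemma pts_length (p : Pt) (l : List Pt) : (pts p l).length = l.length + 1 := by
  simp [pts, List.length_scanl]

lemma self_mem_pts (p : Pt) (l : List Pt) : p ∈ pts p l := by
  cases l <;> simp [pts]

lemma endpt_take (p : Pt) (l : List Pt) (k : ℕ) (hk : k < l.length) :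
    endpt p (l.take (k + 1)) = endpt p (l.take k) + l.get ⟨k, hk⟩ := by
  rw [← List.take_concat_get hk, List.concat_eq_append, endpt_append]
  rfl

lemma endpt_take_length (p : Pt) (l : List Pt) : endpt p (l.take l.length) = endpt p l := by
  simp

lemma mem_pts_iff (p v : Pt) (l : List Pt) :
    v ∈ pts p l ↔ ∃ k, k ≤ l.length ∧ endpt p (l.take k) = v := by
  induction l generalizing p with
  | nil => simp [eq_comm]
  | cons s t ih =>
    simp only [pts_cons, List.mem_cons, ih]
    constructor
    · rintro (rfl | ⟨k, hk, hv⟩)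
      · exact ⟨0, by simp, rfl⟩
      · exact ⟨k + 1, by simpa using hk, by simpa using hv⟩
    · rintro ⟨k, hk, hv⟩
      cases k with
      | zero => left; simpa [eq_comm] using hv
      | succ k => right; exact ⟨k, by simpa using hk, by simpa using hv⟩

def StepsOK (l : List Pt) : Prop := ∀ s ∈ l, s = (1,1) ∨ s = (1,-1) ∨ s = (2,0)

lemma StepsOK.sublist {l l' : List Pt} (h : StepsOK l) (hs : List.Sublist l' l) : StepsOK l' :=
  fun s hsl => h s (hs.mem hsl)

lemma StepsOK.take {l : List Pt} (h : StepsOK l) (k : ℕ) : StepsOK (l.take k) :=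
  h.sublist (List.take_sublist _ _)

lemma StepsOK.drop {l : List Pt} (h : StepsOK l) (k : ℕ) : StepsOK (l.drop k) :=
  h.sublist (List.drop_sublist _ _)

lemma StepsOK.append {l l' : List Pt} (h : StepsOK l) (h' : StepsOK l') : StepsOK (l ++ l') := by
  intro s hs; rcases List.mem_append.1 hs with h1 | h1
  exacts [h s h1, h' s h1]

lemma endpt_take_fst_add (p : Pt) {l : List Pt} (hl : StepsOK l) {k k' : ℕ}
    (hkk : k ≤ k') (hk' : k' ≤ l.length) :
    (endpt p (l.take k)).1 + (k' - k : ℕ) ≤ (endpt p (l.take k')).1 := by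
  induction k' with
  | zero =>
    have : k = 0 := by omega
    subst this; simp
  | succ m ih =>
    rcases Nat.lt_or_ge m k with hm | hm
    · have hk : k = m + 1 := by omega
      subst hk; simp
    · have hml : m < l.length := by omega
      have ht := endpt_take p l m hml
      have hstep := hl _ (List.get_mem l ⟨m, hml⟩)
      have h1 : (endpt p (l.take m)).1 + 1 ≤ (endpt p (l.take (m+1))).1 := by
        rcases hstep with h | h | h <;> rw [ht, h] <;> simp
      have h2 := ih hm (by omega)
      have hc : ((m+1-k:ℕ):ℤ) = ((m-k:ℕ):ℤ)+1 := by omega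
      omega

lemma endpt_take_fst_lt (p : Pt) {l : List Pt} (hl : StepsOK l) {k k' : ℕ}
    (hkk : k < k') (hk' : k' ≤ l.length) :
    (endpt p (l.take k)).1 < (endpt p (l.take k')).1 := by
  have := endpt_take_fst_add p hl (le_of_lt hkk) hk'
  have : ((k' - k : ℕ) : ℤ) ≥ 1 := by omega
  omega

lemma endpt_take_inj (p : Pt) {l : List Pt} (hl : StepsOK l) {k k' : ℕ}
    (hk : k ≤ l.length) (hk' : k' ≤ l.length)
    (h : endpt p (l.take k) = endpt p (l.take k')) : k = k' := by
  rcases Nat.lt_trichotomy k k' with hlt | he | hlt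
  · have := endpt_take_fst_lt p hl hlt hk'; rw [h] at this; omega
  · exact he
  · have := endpt_take_fst_lt p hl hlt hk; rw [h] at this; omega

lemma endpt_fst_le (p : Pt) {l : List Pt} (hl : StepsOK l) :
    p.1 + l.length ≤ (endpt p l).1 := by
  have := endpt_take_fst_add p hl (Nat.zero_le l.length) (le_refl _)
  simpa using this

lemma parity_endpt_take (p : Pt) {l : List Pt} (hl : StepsOK l) (k : ℕ) (hk : k ≤ l.length) :
    ((endpt p (l.take k)).1 + (endpt p (l.take k)).2) % 2 = (p.1 + p.2) % 2 := by
  induction k with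
  | zero => simp
  | succ m ih =>
    have hml : m < l.length := by omega
    have ht := endpt_take p l m hml
    have hstep := hl _ (List.get_mem l ⟨m, hml⟩)
    have h2 := ih (by omega)
    rcases hstep with h | h | h <;> rw [ht, h] <;> simp <;> omega

lemma parity_mem_pts {p v : Pt} {l : List Pt} (hl : StepsOK l) (hv : v ∈ pts p l) :
    (v.1 + v.2) % 2 = (p.1 + p.2) % 2 := by
  obtain ⟨k, hk, rfl⟩ := (mem_pts_iff p v l).1 hv
  exact parity_endpt_take p hl k hk

lemma mem_pts_fst_le {p v : Pt} {l : List Pt} (hl : StepsOK l) (hv : v ∈ pts p l) :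
    p.1 ≤ v.1 ∧ v.1 ≤ (endpt p l).1 := by
  obtain ⟨k, hk, rfl⟩ := (mem_pts_iff p v l).1 hv
  constructor
  · rcases Nat.eq_zero_or_pos k with rfl | hk0
    · simp
    · have := endpt_take_fst_lt p hl hk0 hk; simpa using le_of_lt this
  · rcases Nat.eq_or_lt_of_le hk with rfl | hk0
    · simp
    · have := endpt_take_fst_lt p hl hk0 (le_refl _); simpa using le_of_lt this

lemma endpt_translate (p t : Pt) (l : List Pt) : endpt (p + t) l = endpt p l + t := by
  induction l generalizing p with
  | nil => simp
  | cons s m ih =>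
    simp only [endpt_cons]
    rw [show p + t + s = p + s + t by ring, ih]

lemma mem_pts_translate (p t v : Pt) (l : List Pt) :
    v ∈ pts (p + t) l ↔ ∃ w ∈ pts p l, v = w + t := by
  simp only [mem_pts_iff]
  constructor
  · rintro ⟨k, hk, rfl⟩
    exact ⟨endpt p (l.take k), ⟨k, hk, rfl⟩, (endpt_translate p t _)⟩
  · rintro ⟨w, ⟨k, hk, rfl⟩, rfl⟩
    exact ⟨k, hk, endpt_translate p t _⟩

lemma mem_pts_take {p v : Pt} {l : List Pt} {k : ℕ} (h : v ∈ pts p (l.take k)) :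
    v ∈ pts p l := by
  rw [mem_pts_iff] at h ⊢
  obtain ⟨j, hj, rfl⟩ := h
  rw [List.length_take] at hj
  refine ⟨j, by omega, ?_⟩
  rw [List.take_take, min_eq_left (by omega)]

lemma mem_pts_drop {p v : Pt} {l : List Pt} {k : ℕ} (hk : k ≤ l.length)
    (h : v ∈ pts (endpt p (l.take k)) (l.drop k)) : v ∈ pts p l := by
  rw [mem_pts_iff] at h ⊢
  obtain ⟨j, hj, rfl⟩ := h
  rw [List.length_drop] at hj
  refine ⟨k + j, by omega, ?_⟩
  rw [List.take_add, endpt_append]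

lemma pts_take_append_drop (p : Pt) (l : List Pt) (k : ℕ) :
    pts p l = pts p (l.take k) ++ (pts (endpt p (l.take k)) (l.drop k)).tail := by
  conv_lhs => rw [← List.take_append_drop k l]
  exact pts_append p _ _

lemma endpt_swap {p p' : Pt} {l l' : List Pt} {k m : ℕ} (hm : m ≤ l'.length)
    (hv : endpt p (l.take k) = endpt p' (l'.take m)) :
    endpt p (l.take k ++ l'.drop m) = endpt p' l' := by
  rw [endpt_append, hv, ← endpt_append, List.take_append_drop]

lemma mem_pts_swap {p p' : Pt} {l l' : List Pt} {k m : ℕ}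
    (hk : k ≤ l.length) (hm : m ≤ l'.length)
    (hv : endpt p (l.take k) = endpt p' (l'.take m)) (w : Pt) :
    (w ∈ pts p (l.take k ++ l'.drop m) ∨ w ∈ pts p' (l'.take m ++ l.drop k)) ↔
      (w ∈ pts p l ∨ w ∈ pts p' l') := by
  rw [pts_append p (l.take k), pts_append p' (l'.take m), hv,
    pts_take_append_drop p l k, pts_take_append_drop p' l' m, hv]
  simp only [List.mem_append]
  tauto

lemma IsSmallPath.steps {p q : Pt} {l : List Pt} (h : IsSmallPath p q l) : StepsOK l := h.1.1

lemma IsSmallPath.translate {p q : Pt} {l : List Pt} (t : Pt) (ht : t.2 = 0)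
    (h : IsSmallPath p q l) : IsSmallPath (p + t) (q + t) l := by
  obtain ⟨⟨hs, hnn, he⟩, hsm⟩ := h
  refine ⟨⟨hs, ?_, by rw [endpt_translate, he]⟩, ?_⟩
  · intro v hv
    obtain ⟨w, hw, rfl⟩ := (mem_pts_translate p t v l).1 hv
    have := hnn w hw
    simp only [Prod.snd_add, ht]
    omega
  · intro i hi hget
    rw [endpt_translate]
    have := hsm i hi hget
    simp only [Prod.snd_add, ht]
    omega

lemma IsSmallPath.swap {p q p' q' : Pt} {l l' : List Pt} {k m : ℕ}
    (h : IsSmallPath p q l) (h' : IsSmallPath p' q' l')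
    (hk : k ≤ l.length) (hm : m ≤ l'.length)
    (hv : endpt p (l.take k) = endpt p' (l'.take m)) :
    IsSmallPath p q' (l.take k ++ l'.drop m) := by
  have hlk : (l.take k).length = k := by rw [List.length_take]; omega
  refine ⟨⟨(h.steps.take k).append (h'.steps.drop m), ?_, ?_⟩, ?_⟩
  · intro w hw
    rcases (mem_pts_swap hk hm hv w).1 (Or.inl hw) with h1 | h1
    exacts [h.1.2.1 w h1, h'.1.2.1 w h1]
  · rw [endpt_swap hm hv, h'.1.2.2]
  · intro i hi hget
    rw [List.length_append, hlk, List.length_drop] at hi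
    by_cases hik : i < k
    · have hg : (l.take k ++ l'.drop m).get ⟨i, by simp; omega⟩ = l.get ⟨i, by omega⟩ := by
        simp [List.get_eq_getElem, List.getElem_append_left, hlk, hik]
      have htk : (l.take k ++ l'.drop m).take i = l.take i := by
        rw [List.take_append_of_le_length (by omega), List.take_take, min_eq_left (by omega)]
      rw [htk]
      exact h.2 i (by omega) (by rw [← hg]; exact hget)
    · set j := i - k with hj
      have hij : i = k + j := by omega
      have hg : (l.take k ++ l'.drop m).get ⟨i, by simp; omega⟩ = l'.get ⟨m + j, by omega⟩ := by
        simp only [List.get_eq_getElem]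
        rw [List.getElem_append_right (by omega)]
        simp [hlk, List.getElem_drop, hj]
      have htk : (l.take k ++ l'.drop m).take i = l.take k ++ (l'.drop m).take j := by
        rw [List.take_append, List.take_take, min_eq_right (by omega), hlk]
      rw [htk, endpt_append, hv, ← endpt_append, ← List.take_add]
      exact h'.2 (m + j) (by omega) (by rw [← hg]; exact hget)

def stepCode : Pt → Fin 3 := fun s => if s = (1, 1) then 0 else if s = (1, -1) then 1 else 2

def stepDecode : Fin 3 → Pt := fun i => if i = 0 then (1, 1) else if i = 1 then (1, -1) else (2, 0)

lemma stepDecode_code {s : Pt} (h : s = (1, 1) ∨ s = (1, -1) ∨ s = (2, 0)) :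
    stepDecode (stepCode s) = s := by
  rcases h with rfl | rfl | rfl <;> simp [stepCode, stepDecode]

lemma smallPath_length_le {p q : Pt} {l : List Pt} (h : IsSmallPath p q l) :
    l.length ≤ (q.1 - p.1).toNat := by
  have := endpt_fst_le p h.steps
  rw [h.1.2.2] at this
  omega

instance finite_smallPath (p q : Pt) : Finite {l : List Pt // IsSmallPath p q l} := by
  classical
  set N := (q.1 - p.1).toNat with hN
  have hfin : {m : List (Fin 3) | m.length ≤ N}.Finite := List.finite_length_le (Fin 3) N
  haveI := hfin.to_subtype
  refine Finite.of_injective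
    (fun x => (⟨x.1.map stepCode, by
      simp only [Set.mem_setOf_eq, List.length_map]
      exact smallPath_length_le x.2⟩ : {m : List (Fin 3) | m.length ≤ N})) ?_
  intro x y hxy
  have hx : x.1 = (x.1.map stepCode).map stepDecode := by
    rw [List.map_map]
    conv_lhs => rw [← List.map_id x.1]
    exact (List.map_congr_left (fun s hs => (stepDecode_code (x.2.1.1 s hs)).symm))
  have hy : y.1 = (y.1.map stepCode).map stepDecode := by
    rw [List.map_map]
    conv_lhs => rw [← List.map_id y.1]
    exact (List.map_congr_left (fun s hs => (stepDecode_code (y.2.1.1 s hs)).symm))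
  have hxy1 : x.1 = y.1 := by
    rw [hx, hy]
    congr 1
    exact congrArg Subtype.val hxy
  exact Subtype.ext hxy1

lemma step_cases (p : Pt) {l : List Pt} (hl : StepsOK l) {m : ℕ} (hml : m < l.length) :
    endpt p (l.take (m+1)) = endpt p (l.take m) + (1,1) ∨
    endpt p (l.take (m+1)) = endpt p (l.take m) + (1,-1) ∨
    endpt p (l.take (m+1)) = endpt p (l.take m) + (2,0) := by
  have ht := endpt_take p l m hml
  rcases hl _ (List.get_mem l ⟨m, hml⟩) with h | h | h <;> rw [ht, h] <;> tauto

/-- index of the last path point with x-coordinate `≤ x` -/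
noncomputable def kIdx (p : Pt) (l : List Pt) (x : ℤ) : ℕ :=
  Nat.findGreatest (fun k => (endpt p (l.take k)).1 ≤ x) l.length

/-- the height of the path over `x`: the y-coordinate of the last point with x-coord `≤ x` -/
noncomputable def hgt (p : Pt) (l : List Pt) (x : ℤ) : ℤ :=
  (endpt p (l.take (kIdx p l x))).2

lemma kIdx_le (p : Pt) (l : List Pt) (x : ℤ) : kIdx p l x ≤ l.length :=
  Nat.findGreatest_le _

lemma kIdx_spec (p : Pt) (l : List Pt) {x : ℤ} (hx : p.1 ≤ x) :
    (endpt p (l.take (kIdx p l x))).1 ≤ x := by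
  classical
  exact Nat.findGreatest_spec (P := fun k => (endpt p (l.take k)).1 ≤ x) (Nat.zero_le _) (by simpa using hx)

lemma kIdx_max (p : Pt) (l : List Pt) {x : ℤ} {k : ℕ} (hk1 : kIdx p l x < k)
    (hk2 : k ≤ l.length) : x < (endpt p (l.take k)).1 := by
  classical
  have := Nat.findGreatest_is_greatest (P := fun k => (endpt p (l.take k)).1 ≤ x) hk1 hk2
  omega

lemma kIdx_ge (p : Pt) (l : List Pt) {x : ℤ} {k : ℕ} (hk : k ≤ l.length)
    (h : (endpt p (l.take k)).1 ≤ x) : k ≤ kIdx p l x := by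
  classical
  exact Nat.le_findGreatest hk h

lemma kIdx_lt_length (p : Pt) (l : List Pt) {x : ℤ} (hx0 : p.1 ≤ x) (hx : x < (endpt p l).1) :
    kIdx p l x < l.length := by
  rcases Nat.lt_or_ge (kIdx p l x) l.length with h | h
  · exact h
  · exfalso
    have h2 : kIdx p l x = l.length := le_antisymm (kIdx_le p l x) h
    have := kIdx_spec p l hx0
    rw [h2] at this
    simp at this
    omega

lemma kIdx_fst_ge (p : Pt) {l : List Pt} (hl : StepsOK l) {x : ℤ} (hx0 : p.1 ≤ x)
    (hx1 : x ≤ (endpt p l).1) :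
    x - 1 ≤ (endpt p (l.take (kIdx p l x))).1 := by
  rcases eq_or_lt_of_le hx1 with he | hlt
  · have hk : kIdx p l x = l.length :=
      le_antisymm (kIdx_le p l x) (kIdx_ge p l (le_refl _) (by simp; omega))
    rw [hk]
    simp
    omega
  · have hk := kIdx_lt_length p l hx0 hlt
    have h2 := kIdx_max p l (Nat.lt_succ_self _) hk
    rcases step_cases p hl hk with h | h | h <;> rw [h] at h2 <;> simp at h2 <;> omega

lemma kIdx_succ (p : Pt) {l : List Pt} (hl : StepsOK l) {x : ℤ} (hx0 : p.1 ≤ x)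
    (hx1 : x + 1 ≤ (endpt p l).1) :
    kIdx p l (x+1) = kIdx p l x ∨ kIdx p l (x+1) = kIdx p l x + 1 := by
  have hk1 : kIdx p l x ≤ kIdx p l (x+1) :=
    kIdx_ge p l (kIdx_le p l x) (le_trans (kIdx_spec p l hx0) (by omega))
  rcases Nat.lt_or_ge (kIdx p l (x+1)) (kIdx p l x + 2) with h | h
  · omega
  · exfalso
    have hlen := kIdx_le p l (x+1)
    have h1 : x < (endpt p (l.take (kIdx p l x + 1))).1 :=
      kIdx_max p l (Nat.lt_succ_self _) (by omega)
    have h2 : (endpt p (l.take (kIdx p l x + 1))).1 < (endpt p (l.take (kIdx p l (x+1)))).1 :=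
      endpt_take_fst_lt p hl (by omega) hlen
    have h3 := kIdx_spec p l (x := x+1) (by omega)
    omega

lemma hgt_succ_diff (p : Pt) {l : List Pt} (hl : StepsOK l) {x : ℤ} (hx0 : p.1 ≤ x)
    (hx1 : x + 1 ≤ (endpt p l).1) :
    hgt p l (x+1) ≤ hgt p l x + 1 ∧ hgt p l x - 1 ≤ hgt p l (x+1) := by
  rcases kIdx_succ p hl hx0 hx1 with h | h
  · unfold hgt; rw [h]; omega
  · have hk : kIdx p l x < l.length := by
      have := kIdx_le p l (x+1); omega
    unfold hgt
    rw [h]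
    rcases step_cases p hl hk with h2 | h2 | h2 <;> rw [h2] <;> simp <;> omega

lemma kIdx_start (p : Pt) {l : List Pt} (hl : StepsOK l) : kIdx p l p.1 = 0 := by
  rcases Nat.eq_zero_or_pos (kIdx p l p.1) with h | h
  · exact h
  · exfalso
    have h1 := kIdx_spec p l (x := p.1) (le_refl _)
    have h2 := endpt_take_fst_add p hl (Nat.zero_le (kIdx p l p.1)) (kIdx_le p l p.1)
    simp at h2
    omega

lemma hgt_start (p : Pt) {l : List Pt} (hl : StepsOK l) : hgt p l p.1 = p.2 := by
  unfold hgt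
  rw [kIdx_start p hl]
  simp

lemma kIdx_end (p : Pt) (l : List Pt) : kIdx p l (endpt p l).1 = l.length :=
  le_antisymm (kIdx_le p l _) (kIdx_ge p l (le_refl _) (by simp))

lemma hgt_end (p : Pt) (l : List Pt) : hgt p l (endpt p l).1 = (endpt p l).2 := by
  unfold hgt
  rw [kIdx_end p l]
  simp

lemma hgt_nonneg (p : Pt) {l : List Pt} (hnn : ∀ v ∈ pts p l, 0 ≤ v.2) (x : ℤ) :
    0 ≤ hgt p l x :=
  hnn _ ((mem_pts_iff _ _ _).2 ⟨kIdx p l x, kIdx_le p l x, rfl⟩)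

lemma level_skip (p : Pt) {l : List Pt} (hl : StepsOK l) {x : ℤ} (hx0 : p.1 ≤ x)
    (hx2 : x + 1 ≤ (endpt p l).1)
    (hne : (endpt p (l.take (kIdx p l x))).1 = x - 1) :
    kIdx p l (x+1) = kIdx p l x + 1 ∧ hgt p l (x+1) = hgt p l x := by
  have hk : kIdx p l x < l.length := kIdx_lt_length p l hx0 (by omega)
  have h1 : x < (endpt p (l.take (kIdx p l x + 1))).1 := kIdx_max p l (Nat.lt_succ_self _) hk
  rcases step_cases p hl hk with h2 | h2 | h2 <;> rw [h2] at h1 <;> simp at h1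
  · omega
  · omega
  · have h3 : kIdx p l x + 1 ≤ kIdx p l (x+1) :=
      kIdx_ge p l hk (by rw [h2]; simp; omega)
    have h4 := kIdx_succ p hl hx0 hx2
    have h5 : kIdx p l (x+1) = kIdx p l x + 1 := by omega
    refine ⟨h5, ?_⟩
    unfold hgt
    rw [h5, h2]
    simp

lemma hgt_parity (p : Pt) {l : List Pt} (hl : StepsOK l) (x : ℤ) :
    (hgt p l x + (endpt p (l.take (kIdx p l x))).1) % 2 = (p.1 + p.2) % 2 := by
  have := parity_endpt_take p hl (kIdx p l x) (kIdx_le p l x)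
  unfold hgt
  omega

lemma shared_of_hgt_eq {s s' : Pt} {l l' : List Pt} (hl : StepsOK l) (hl' : StepsOK l')
    (hs2 : s.2 = 0) (hs'2 : s'.2 = 0) (hpar : (s.1 + s'.1) % 2 = 0) {x : ℤ}
    (hr1 : s.1 ≤ x) (hr2 : x ≤ (endpt s l).1) (hr3 : s'.1 ≤ x) (hr4 : x ≤ (endpt s' l').1)
    (he : hgt s l x = hgt s' l' x) :
    ∃ v, v ∈ pts s l ∧ v ∈ pts s' l' := by
  set a := endpt s (l.take (kIdx s l x)) with ha
  set b := endpt s' (l'.take (kIdx s' l' x)) with hb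
  have ha1 : x - 1 ≤ a.1 := kIdx_fst_ge s hl hr1 hr2
  have ha2 : a.1 ≤ x := kIdx_spec s l hr1
  have hb1 : x - 1 ≤ b.1 := kIdx_fst_ge s' hl' hr3 hr4
  have hb2 : b.1 ≤ x := kIdx_spec s' l' hr3
  have hpa := hgt_parity s hl x
  have hpb := hgt_parity s' hl' x
  have hab : a.1 = b.1 := by
    unfold hgt at he hpa hpb
    rw [← ha] at he hpa
    rw [← hb] at he hpb
    omega
  have hab2 : a = b := by
    have : a.2 = b.2 := he
    exact Prod.ext hab this
  refine ⟨a, (mem_pts_iff _ _ _).2 ⟨_, kIdx_le s l x, rfl⟩, ?_⟩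
  rw [hab2, hb]
  exact (mem_pts_iff _ _ _).2 ⟨_, kIdx_le s' l' x, rfl⟩

lemma crossing {s t s' t' : Pt} {l l' : List Pt}
    (hl : StepsOK l) (hnn : ∀ v ∈ pts s l, 0 ≤ v.2) (he : endpt s l = t)
    (hl' : StepsOK l') (hnn' : ∀ v ∈ pts s' l', 0 ≤ v.2) (he' : endpt s' l' = t')
    (hs2 : s.2 = 0) (hs'2 : s'.2 = 0) (ht'2 : t'.2 = 0)
    (h1 : s'.1 < s.1) (h2 : s.1 < t'.1) (h3 : t'.1 < t.1)
    (hpar : (s.1 + s'.1) % 2 = 0) :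
    ∃ v, v ∈ pts s l ∧ v ∈ pts s' l' := by
  classical
  have hend : (endpt s l).1 = t.1 := by rw [he]
  have hend' : (endpt s' l').1 = t'.1 := by rw [he']
  set D : ℕ → ℤ := fun d => hgt s l (s.1 + d) - hgt s' l' (s.1 + d) with hD
  set N : ℕ := (t'.1 - s.1).toNat with hNdef
  have hN : s.1 + (N : ℤ) = t'.1 := by omega
  have hPN : 0 ≤ D N := by
    have hq : hgt s' l' (s.1 + N) = 0 := by
      rw [hN, ← hend']
      rw [hgt_end]
      rw [he', ht'2]
    have hp : 0 ≤ hgt s l (s.1 + N) := hgt_nonneg s hnn _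
    simp only [hD]
    omega
  have hex : ∃ d, 0 ≤ D d := ⟨N, hPN⟩
  have hfind : 0 ≤ D (Nat.find hex) := Nat.find_spec hex
  have hd₀N : Nat.find hex ≤ N := Nat.find_min' hex hPN
  -- helper for shared extraction at position s.1 + d for d ≤ N with D = 0
  have hshared : ∀ d : ℕ, d ≤ N → D d = 0 → ∃ v, v ∈ pts s l ∧ v ∈ pts s' l' := by
    intro d hdN hD0
    refine shared_of_hgt_eq hl hl' hs2 hs'2 hpar (x := s.1 + d) (by omega) ?_ (by omega) ?_
      (by simp only [hD] at hD0; omega)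
    · rw [hend]; omega
    · rw [hend']; omega
  rcases Nat.eq_zero_or_pos (Nat.find hex) with h0 | hpos
  · refine hshared 0 (Nat.zero_le _) ?_
    rw [h0] at hfind
    have hps : hgt s l (s.1 + (0:ℕ)) = 0 := by
      simpa [hs2] using hgt_start s hl
    have hq : 0 ≤ hgt s' l' (s.1 + (0:ℕ)) := hgt_nonneg s' hnn' _
    simp only [hD] at hfind ⊢
    omega
  · obtain ⟨d, hd1⟩ : ∃ d, Nat.find hex = d + 1 := ⟨Nat.find hex - 1, by omega⟩
    rw [hd1] at hfind hd₀N
    have hDd : ¬ 0 ≤ D d := Nat.find_min hex (by omega)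
    rcases eq_or_lt_of_le hfind with hDeq | hDgt
    · exact hshared (d + 1) hd₀N hDeq.symm
    · exfalso
      set x : ℤ := s.1 + d with hx
      have hcast : s.1 + ((d+1 : ℕ) : ℤ) = x + 1 := by push_cast; omega
      have hxr1 : s.1 ≤ x := by omega
      have hxr2 : x + 1 ≤ (endpt s l).1 := by rw [hend]; omega
      have hxr3 : s'.1 ≤ x := by omega
      have hxr4 : x + 1 ≤ (endpt s' l').1 := by rw [hend']; omega
      have hP := hgt_succ_diff s hl hxr1 hxr2
      have hQ := hgt_succ_diff s' hl' hxr3 hxr4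
      have r1 : D d = hgt s l x - hgt s' l' x := rfl
      have r2 : D (d+1) = hgt s l (x+1) - hgt s' l' (x+1) := by
        simp only [hD]; rw [hcast]
      have hDm1 : hgt s l x - hgt s' l' x = -1 := by omega
      have hD1 : hgt s l (x+1) - hgt s' l' (x+1) = 1 := by omega
      -- parity analysis at x
      have ha1 : x - 1 ≤ (endpt s (l.take (kIdx s l x))).1 := kIdx_fst_ge s hl hxr1 (by omega)
      have ha2 : (endpt s (l.take (kIdx s l x))).1 ≤ x := kIdx_spec s l hxr1
      have hb1 : x - 1 ≤ (endpt s' (l'.take (kIdx s' l' x))).1 := kIdx_fst_ge s' hl' hxr3 (by omega)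
      have hb2 : (endpt s' (l'.take (kIdx s' l' x))).1 ≤ x := kIdx_spec s' l' hxr3
      have hpa := hgt_parity s hl x
      have hpb := hgt_parity s' hl' x
      have hcases : (endpt s (l.take (kIdx s l x))).1 = x - 1 ∨
          (endpt s' (l'.take (kIdx s' l' x))).1 = x - 1 := by
        by_contra hcon
        push_neg at hcon
        have e1 : (endpt s (l.take (kIdx s l x))).1 = x := by omega
        have e2 : (endpt s' (l'.take (kIdx s' l' x))).1 = x := by omega
        rw [e1] at hpa; rw [e2] at hpb
        omega
      rcases hcases with hc | hc
      · -- P virtual at x: h_P(x+1) = h_P(x)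
        have := (level_skip s hl hxr1 hxr2 hc).2
        omega
      · -- Q virtual at x
        have := (level_skip s' hl' hxr3 hxr4 hc).2
        omega

open scoped Classical

section Involution

variable {n : ℕ}

/-- path `i` shares a vertex with some other path -/
def meets (A : Fin n → Pt) (π : Fin n → List Pt) (i : Fin n) : Prop :=
  ∃ j, j ≠ i ∧ ∃ v, v ∈ pts (A i) (π i) ∧ v ∈ pts (A j) (π j)

def Intersecting (A : Fin n → Pt) (π : Fin n → List Pt) : Prop := ∃ i, meets A π i

variable (A : Fin n → Pt) (π : Fin n → List Pt)

lemma meets_filter_nonempty (h : Intersecting A π) :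
    (Finset.univ.filter (fun i => meets A π i)).Nonempty := by
  obtain ⟨i, hi⟩ := h
  exact ⟨i, by simp [hi]⟩

noncomputable def iMin (h : Intersecting A π) : Fin n :=
  (Finset.univ.filter (fun i => meets A π i)).min' (meets_filter_nonempty A π h)

lemma iMin_meets (h : Intersecting A π) : meets A π (iMin A π h) := by
  have := Finset.min'_mem _ (meets_filter_nonempty A π h)
  exact (Finset.mem_filter.1 this).2

lemma iMin_min (h : Intersecting A π) {i : Fin n} (hi : meets A π i) : iMin A π h ≤ i :=
  Finset.min'_le _ _ (by simp [hi])

lemma exK (h : Intersecting A π) :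
    ∃ k, k ≤ (π (iMin A π h)).length ∧ ∃ j, j ≠ iMin A π h ∧
      endpt (A (iMin A π h)) ((π (iMin A π h)).take k) ∈ pts (A j) (π j) := by
  obtain ⟨j, hj, v, hv1, hv2⟩ := iMin_meets A π h
  obtain ⟨k, hk, rfl⟩ := (mem_pts_iff _ _ _).1 hv1
  exact ⟨k, hk, j, hj, hv2⟩

noncomputable def kMin (h : Intersecting A π) : ℕ := Nat.find (exK A π h)

lemma kMin_le (h : Intersecting A π) : kMin A π h ≤ (π (iMin A π h)).length :=
  (Nat.find_spec (exK A π h)).1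

noncomputable def vPt (h : Intersecting A π) : Pt :=
  endpt (A (iMin A π h)) ((π (iMin A π h)).take (kMin A π h))

lemma vPt_mem (h : Intersecting A π) : vPt A π h ∈ pts (A (iMin A π h)) (π (iMin A π h)) :=
  (mem_pts_iff _ _ _).2 ⟨kMin A π h, kMin_le A π h, rfl⟩

lemma kMin_spec (h : Intersecting A π) :
    ∃ j, j ≠ iMin A π h ∧ vPt A π h ∈ pts (A j) (π j) :=
  (Nat.find_spec (exK A π h)).2

lemma kMin_min (h : Intersecting A π) {k : ℕ} (hk : k < kMin A π h)
    (hklen : k ≤ (π (iMin A π h)).length) :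
    ¬ ∃ j, j ≠ iMin A π h ∧
      endpt (A (iMin A π h)) ((π (iMin A π h)).take k) ∈ pts (A j) (π j) := by
  intro hcon
  exact (Nat.find_min (exK A π h) hk) ⟨hklen, hcon⟩

lemma jSet_nonempty (h : Intersecting A π) :
    (Finset.univ.filter (fun j => j ≠ iMin A π h ∧ vPt A π h ∈ pts (A j) (π j))).Nonempty := by
  obtain ⟨j, hj1, hj2⟩ := kMin_spec A π h
  exact ⟨j, by simp [hj1, hj2]⟩

noncomputable def jMax (h : Intersecting A π) : Fin n :=
  (Finset.univ.filter (fun j => j ≠ iMin A π h ∧ vPt A π h ∈ pts (A j) (π j))).max'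
    (jSet_nonempty A π h)

lemma jMax_spec (h : Intersecting A π) :
    jMax A π h ≠ iMin A π h ∧ vPt A π h ∈ pts (A (jMax A π h)) (π (jMax A π h)) := by
  have := Finset.max'_mem _ (jSet_nonempty A π h)
  exact (Finset.mem_filter.1 this).2

lemma jMax_max (h : Intersecting A π) {j : Fin n} (hj : j ≠ iMin A π h)
    (hv : vPt A π h ∈ pts (A j) (π j)) : j ≤ jMax A π h :=
  Finset.le_max' _ _ (by simp [hj, hv])

lemma iMin_lt_jMax (h : Intersecting A π) : iMin A π h < jMax A π h := by
  have h1 : meets A π (jMax A π h) :=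
    ⟨iMin A π h, Ne.symm (jMax_spec A π h).1, vPt A π h,
      (jMax_spec A π h).2, vPt_mem A π h⟩
  have h2 := iMin_min A π h h1
  exact lt_of_le_of_ne h2 (Ne.symm (jMax_spec A π h).1)

lemma exM (h : Intersecting A π) :
    ∃ m, m ≤ (π (jMax A π h)).length ∧
      endpt (A (jMax A π h)) ((π (jMax A π h)).take m) = vPt A π h := by
  exact (mem_pts_iff _ _ _).1 (jMax_spec A π h).2

noncomputable def mMin (h : Intersecting A π) : ℕ := Nat.find (exM A π h)

lemma mMin_le (h : Intersecting A π) : mMin A π h ≤ (π (jMax A π h)).length :=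
  (Nat.find_spec (exM A π h)).1

lemma mMin_spec (h : Intersecting A π) :
    endpt (A (jMax A π h)) ((π (jMax A π h)).take (mMin A π h)) = vPt A π h :=
  (Nat.find_spec (exM A π h)).2

lemma mMin_min (h : Intersecting A π) {m : ℕ} (hm : m < mMin A π h)
    (hmlen : m ≤ (π (jMax A π h)).length) :
    endpt (A (jMax A π h)) ((π (jMax A π h)).take m) ≠ vPt A π h := by
  have := Nat.find_min (exM A π h) hm
  tauto

/-- the tail-swapped tuple of paths -/
noncomputable def swapped (h : Intersecting A π) : Fin n → List Pt :=
  Function.update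
    (Function.update π (iMin A π h)
      ((π (iMin A π h)).take (kMin A π h) ++ (π (jMax A π h)).drop (mMin A π h)))
    (jMax A π h)
    ((π (jMax A π h)).take (mMin A π h) ++ (π (iMin A π h)).drop (kMin A π h))

lemma swapped_apply_i (h : Intersecting A π) :
    swapped A π h (iMin A π h) =
      (π (iMin A π h)).take (kMin A π h) ++ (π (jMax A π h)).drop (mMin A π h) := by
  unfold swapped
  rw [Function.update_of_ne (Ne.symm (jMax_spec A π h).1), Function.update_self]

lemma swapped_apply_j (h : Intersecting A π) :
    swapped A π h (jMax A π h) =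
      (π (jMax A π h)).take (mMin A π h) ++ (π (iMin A π h)).drop (kMin A π h) := by
  unfold swapped
  rw [Function.update_self]

lemma swapped_apply_other (h : Intersecting A π) {i : Fin n}
    (h1 : i ≠ iMin A π h) (h2 : i ≠ jMax A π h) : swapped A π h i = π i := by
  unfold swapped
  rw [Function.update_of_ne h2, Function.update_of_ne h1]

end Involution

section Involution2

variable {n : ℕ} (A : Fin n → Pt) (π : Fin n → List Pt)

lemma take_append_take {l l2 : List Pt} {k' k : ℕ} (hk' : k' ≤ k) (hk : k ≤ l.length) :
    (l.take k ++ l2).take k' = l.take k' := by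
  rw [List.take_append_of_le_length (by rw [List.length_take]; omega), List.take_take,
    min_eq_left hk']

lemma drop_append_drop {l l2 : List Pt} {k : ℕ} (hk : k ≤ l.length) :
    (l.take k ++ l2).drop k = l2 := by
  exact List.drop_left' (by rw [List.length_take]; omega)

lemma length_take_append {l l2 : List Pt} {k : ℕ} (hk : k ≤ l.length) :
    (l.take k ++ l2).length = k + l2.length := by
  rw [List.length_append, List.length_take]; omega

lemma vPt_mem_swapped_i (h : Intersecting A π) :
    vPt A π h ∈ pts (A (iMin A π h)) (swapped A π h (iMin A π h)) := by
  rw [swapped_apply_i]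
  refine (mem_pts_iff _ _ _).2 ⟨kMin A π h, ?_, ?_⟩
  · rw [length_take_append (kMin_le A π h)]; omega
  · rw [take_append_take (le_refl _) (kMin_le A π h)]; rfl

lemma vPt_mem_swapped_j (h : Intersecting A π) :
    vPt A π h ∈ pts (A (jMax A π h)) (swapped A π h (jMax A π h)) := by
  rw [swapped_apply_j]
  refine (mem_pts_iff _ _ _).2 ⟨mMin A π h, ?_, ?_⟩
  · rw [length_take_append (mMin_le A π h)]; omega
  · rw [take_append_take (le_refl _) (mMin_le A π h)]
    exact mMin_spec A π h

lemma swapped_intersecting (h : Intersecting A π) : Intersecting A (swapped A π h) :=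
  ⟨iMin A π h, jMax A π h, (jMax_spec A π h).1, vPt A π h,
    vPt_mem_swapped_i A π h, vPt_mem_swapped_j A π h⟩

lemma mem_swapped_union (h : Intersecting A π) (w : Pt) :
    (w ∈ pts (A (iMin A π h)) (swapped A π h (iMin A π h)) ∨
      w ∈ pts (A (jMax A π h)) (swapped A π h (jMax A π h))) ↔
    (w ∈ pts (A (iMin A π h)) (π (iMin A π h)) ∨
      w ∈ pts (A (jMax A π h)) (π (jMax A π h))) := by
  rw [swapped_apply_i, swapped_apply_j]
  exact mem_pts_swap (kMin_le A π h) (mMin_le A π h) (mMin_spec A π h).symm w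

lemma meets_swapped_iff (h : Intersecting A π) {i : Fin n} (h1 : i ≠ iMin A π h)
    (h2 : i ≠ jMax A π h) : meets A (swapped A π h) i ↔ meets A π i := by
  have hPi : swapped A π h i = π i := swapped_apply_other A π h h1 h2
  constructor
  · rintro ⟨j, hj, v, hv1, hv2⟩
    rw [hPi] at hv1
    by_cases hji : j = iMin A π h
    · subst hji
      rcases (mem_swapped_union A π h v).1 (Or.inl hv2) with hc | hc
      · exact ⟨_, Ne.symm h1, v, hv1, hc⟩
      · exact ⟨_, Ne.symm h2, v, hv1, hc⟩
    · by_cases hjj : j = jMax A π h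
      · subst hjj
        rcases (mem_swapped_union A π h v).1 (Or.inr hv2) with hc | hc
        · exact ⟨_, Ne.symm h1, v, hv1, hc⟩
        · exact ⟨_, Ne.symm h2, v, hv1, hc⟩
      · rw [swapped_apply_other A π h hji hjj] at hv2
        exact ⟨j, hj, v, hv1, hv2⟩
  · rintro ⟨j, hj, v, hv1, hv2⟩
    rw [← hPi] at hv1
    by_cases hji : j = iMin A π h
    · subst hji
      rcases (mem_swapped_union A π h v).2 (Or.inl hv2) with hc | hc
      · exact ⟨_, Ne.symm h1, v, hv1, hc⟩
      · exact ⟨_, Ne.symm h2, v, hv1, hc⟩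
    · by_cases hjj : j = jMax A π h
      · subst hjj
        rcases (mem_swapped_union A π h v).2 (Or.inr hv2) with hc | hc
        · exact ⟨_, Ne.symm h1, v, hv1, hc⟩
        · exact ⟨_, Ne.symm h2, v, hv1, hc⟩
      · rw [← swapped_apply_other A π h hji hjj] at hv2
        exact ⟨j, hj, v, hv1, hv2⟩

lemma iMin_swapped (h : Intersecting A π) :
    iMin A (swapped A π h) (swapped_intersecting A π h) = iMin A π h := by
  set h' := swapped_intersecting A π h
  refine le_antisymm ?_ ?_
  · refine iMin_min A _ h' ⟨jMax A π h, (jMax_spec A π h).1, vPt A π h,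
      vPt_mem_swapped_i A π h, vPt_mem_swapped_j A π h⟩
  · by_cases hc1 : iMin A (swapped A π h) h' = iMin A π h
    · exact le_of_eq hc1.symm
    · by_cases hc2 : iMin A (swapped A π h) h' = jMax A π h
      · rw [hc2]
        exact le_of_lt (iMin_lt_jMax A π h)
      · exact iMin_min A π h ((meets_swapped_iff A π h hc1 hc2).1 (iMin_meets A _ h'))

lemma kMin_swapped (hst : ∀ i, StepsOK (π i)) (h : Intersecting A π) :
    kMin A (swapped A π h) (swapped_intersecting A π h) = kMin A π h := by
  have hdef : kMin A (swapped A π h) (swapped_intersecting A π h) =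
      Nat.find (exK A (swapped A π h) (swapped_intersecting A π h)) := rfl
  rw [hdef, Nat.find_eq_iff]
  simp only [iMin_swapped A π h]
  constructor
  · refine ⟨?_, jMax A π h, (jMax_spec A π h).1, ?_⟩
    · rw [swapped_apply_i, length_take_append (kMin_le A π h)]; omega
    · rw [swapped_apply_i, take_append_take (le_refl _) (kMin_le A π h)]
      exact vPt_mem_swapped_j A π h
  · intro k hk
    rintro ⟨hklen, j, hj, hmem⟩
    rw [swapped_apply_i, take_append_take (le_of_lt hk) (kMin_le A π h)] at hmem
    have hklen2 : k ≤ (π (iMin A π h)).length := le_trans (le_of_lt hk) (kMin_le A π h)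
    by_cases hjj : j = jMax A π h
    · subst hjj
      rw [swapped_apply_j, mem_pts_iff] at hmem
      obtain ⟨r, hr, hre⟩ := hmem
      rw [length_take_append (mMin_le A π h)] at hr
      by_cases hrm : r ≤ mMin A π h
      · rw [take_append_take hrm (mMin_le A π h)] at hre
        refine kMin_min A π h hk hklen2 ⟨jMax A π h, (jMax_spec A π h).1, ?_⟩
        exact (mem_pts_iff _ _ _).2 ⟨r, le_trans hrm (mMin_le A π h), hre⟩
      · rw [List.take_append, List.take_take,
          min_eq_right (by omega), List.length_take,
          min_eq_left (mMin_le A π h), endpt_append, mMin_spec A π h] at hre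
        have hv : vPt A π h = endpt (A (iMin A π h)) ((π (iMin A π h)).take (kMin A π h)) := rfl
        rw [hv, ← endpt_append, ← List.take_add] at hre
        rw [List.length_drop] at hr
        have hbound : kMin A π h + (r - mMin A π h) ≤ (π (iMin A π h)).length := by
          have := kMin_le A π h
          omega
        have := endpt_take_inj (A (iMin A π h)) (hst (iMin A π h)) hklen2 hbound hre.symm
        omega
    · rw [swapped_apply_other A π h hj hjj] at hmem
      exact kMin_min A π h hk hklen2 ⟨j, hj, hmem⟩

lemma vPt_swapped (hst : ∀ i, StepsOK (π i)) (h : Intersecting A π) :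
    vPt A (swapped A π h) (swapped_intersecting A π h) = vPt A π h := by
  unfold vPt
  rw [iMin_swapped A π h, kMin_swapped A π hst h, swapped_apply_i,
    take_append_take (le_refl _) (kMin_le A π h)]

lemma jMax_swapped (hst : ∀ i, StepsOK (π i)) (h : Intersecting A π) :
    jMax A (swapped A π h) (swapped_intersecting A π h) = jMax A π h := by
  set h' := swapped_intersecting A π h with hh'
  refine le_antisymm ?_ ?_
  · have hspec := jMax_spec A (swapped A π h) h'
    rw [iMin_swapped A π h, vPt_swapped A π hst h] at hspec
    by_cases hc1 : jMax A (swapped A π h) h' = jMax A π h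
    · exact le_of_eq hc1
    · rw [swapped_apply_other A π h hspec.1 hc1] at hspec
      exact jMax_max A π h hspec.1 hspec.2
  · refine jMax_max A (swapped A π h) h' ?_ ?_
    · rw [iMin_swapped A π h]
      exact (jMax_spec A π h).1
    · rw [vPt_swapped A π hst h]
      exact vPt_mem_swapped_j A π h

lemma mMin_swapped (hst : ∀ i, StepsOK (π i)) (h : Intersecting A π) :
    mMin A (swapped A π h) (swapped_intersecting A π h) = mMin A π h := by
  have hdef : mMin A (swapped A π h) (swapped_intersecting A π h) =
      Nat.find (exM A (swapped A π h) (swapped_intersecting A π h)) := rfl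
  rw [hdef, Nat.find_eq_iff]
  simp only [jMax_swapped A π hst h, vPt_swapped A π hst h]
  constructor
  · refine ⟨?_, ?_⟩
    · rw [swapped_apply_j, length_take_append (mMin_le A π h)]; omega
    · rw [swapped_apply_j, take_append_take (le_refl _) (mMin_le A π h)]
      exact mMin_spec A π h
  · intro m hm
    rintro ⟨hmlen, hme⟩
    rw [swapped_apply_j, take_append_take (le_of_lt hm) (mMin_le A π h)] at hme
    exact mMin_min A π h hm (le_trans (le_of_lt hm) (mMin_le A π h)) hme

lemma swapped_swapped (hst : ∀ i, StepsOK (π i)) (h : Intersecting A π) :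
    swapped A (swapped A π h) (swapped_intersecting A π h) = π := by
  set h' := swapped_intersecting A π h with hh'
  funext i
  by_cases hi : i = iMin A π h
  · subst hi
    have e : swapped A (swapped A π h) h' (iMin A π h) =
        ((swapped A π h) (iMin A π h)).take (kMin A π h) ++
          ((swapped A π h) (jMax A π h)).drop (mMin A π h) := by
      have e0 := swapped_apply_i A (swapped A π h) h'
      rw [iMin_swapped A π h, kMin_swapped A π hst h, jMax_swapped A π hst h,
        mMin_swapped A π hst h] at e0
      exact e0
    rw [e, swapped_apply_i, swapped_apply_j, take_append_take (le_refl _) (kMin_le A π h),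
      drop_append_drop (mMin_le A π h), List.take_append_drop]
  · by_cases hj : i = jMax A π h
    · subst hj
      have e : swapped A (swapped A π h) h' (jMax A π h) =
          ((swapped A π h) (jMax A π h)).take (mMin A π h) ++
            ((swapped A π h) (iMin A π h)).drop (kMin A π h) := by
        have e0 := swapped_apply_j A (swapped A π h) h'
        rw [iMin_swapped A π h, kMin_swapped A π hst h, jMax_swapped A π hst h,
          mMin_swapped A π hst h] at e0
        exact e0
      rw [e, swapped_apply_i, swapped_apply_j, take_append_take (le_refl _) (mMin_le A π h),
        drop_append_drop (kMin_le A π h), List.take_append_drop]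
    · have e := swapped_apply_other A (swapped A π h) h'
        (i := i) (by rw [iMin_swapped A π h]; exact hi) (by rw [jMax_swapped A π hst h]; exact hj)
      rw [e, swapped_apply_other A π h hi hj]

end Involution2

section Assembly

def translateEquiv (p q t : Pt) (ht : t.2 = 0) :
    {l : List Pt // IsSmallPath p q l} ≃ {l : List Pt // IsSmallPath (p + t) (q + t) l} where
  toFun x := ⟨x.1, x.2.translate t ht⟩
  invFun x := ⟨x.1, by
    have := x.2.translate (-t) (by simp [ht])
    simpa using this⟩
  left_inv x := rfl
  right_inv x := rfl

def Apt (n : ℕ) (i : Fin n) : Pt := (-(2 * (i : ℤ) + 1), 0)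
def Bpt (n : ℕ) (i : Fin n) : Pt := (2 * (i : ℤ) + 1, 0)

lemma schS_eq_card {n : ℕ} (i j : Fin n) :
    (schS ((i : ℕ) + (j : ℕ) + 1)) = Nat.card {l : List Pt // IsSmallPath (Apt n i) (Bpt n j) l} := by
  apply Nat.card_congr
  have h1 : ((0 : ℤ), (0 : ℤ)) + Apt n i = Apt n i := by simp
  have h2 : ((2 * (((i : ℕ) + (j : ℕ) + 1 : ℕ) : ℤ), (0 : ℤ)) : Pt) + Apt n i = Bpt n j := by
    simp only [Apt, Bpt, Prod.mk_add_mk, Prod.mk.injEq]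
    constructor
    · push_cast; ring
    · ring
  exact (translateEquiv _ _ (Apt n i) rfl).trans (Equiv.subtypeEquivRight (fun l => by
    rw [h1, h2]))

noncomputable instance fintypePath (p q : Pt) : Fintype {l : List Pt // IsSmallPath p q l} :=
  Fintype.ofFinite _

abbrev Tup (n : ℕ) (σ : Equiv.Perm (Fin n)) :=
  ∀ i : Fin n, {l : List Pt // IsSmallPath (Apt n i) (Bpt n (σ i)) l}

abbrev SysX (n : ℕ) := Σ σ : Equiv.Perm (Fin n), Tup n σ

def BadX {n : ℕ} (p : SysX n) : Prop := Intersecting (Apt n) (fun i => (p.2 i).1)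

lemma sysX_ext {n : ℕ} (p q : SysX n) (h1 : p.1 = q.1)
    (h2 : ∀ i, (p.2 i).1 = (q.2 i).1) : p = q := by
  obtain ⟨σ, t⟩ := p
  obtain ⟨τ, u⟩ := q
  cases h1
  simp only [Sigma.mk.inj_iff, heq_eq_eq, true_and]
  funext i
  exact Subtype.ext (h2 i)

lemma good_perm_eq_one {n : ℕ} (p : SysX n) (hg : ¬ BadX p) : p.1 = 1 := by
  have hmono : StrictMono p.1 := by
    intro i j hij
    rcases lt_or_ge (p.1 i) (p.1 j) with h | h
    · exact h
    · exfalso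
      have hne : p.1 j ≠ p.1 i := fun hc => absurd (p.1.injective hc) (ne_of_gt hij)
      have hlt : p.1 j < p.1 i := lt_of_le_of_ne h hne
      have hi := (p.2 i).2
      have hj := (p.2 j).2
      obtain ⟨v, hv1, hv2⟩ := crossing (s := Apt n i) (t := Bpt n (p.1 i))
        (s' := Apt n j) (t' := Bpt n (p.1 j))
        hi.steps hi.1.2.1 hi.1.2.2 hj.steps hj.1.2.1 hj.1.2.2
        rfl rfl rfl
        (by simp only [Apt]; have h' : (i : ℕ) < (j : ℕ) := hij; omega)
        (by simp only [Apt, Bpt]; omega)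
        (by simp only [Bpt]; have h' : ((p.1 j) : ℕ) < ((p.1 i) : ℕ) := hlt; omega)
        (by simp only [Apt]; omega)
      exact hg ⟨i, j, ne_of_gt hij, v, hv1, hv2⟩
  have hinvmono : StrictMono (p.1⁻¹ : Equiv.Perm (Fin n)) := by
    intro a b hab
    rcases lt_or_ge ((p.1⁻¹ : Equiv.Perm (Fin n)) a) ((p.1⁻¹ : Equiv.Perm (Fin n)) b) with h | h
    · exact h
    · exfalso
      have h2 := hmono.monotone h
      simp only [Equiv.Perm.coe_inv, Equiv.apply_symm_apply] at h2
      exact absurd hab (not_lt.2 h2)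
  haveI : WellFoundedLT (Fin n) := inferInstance
  ext i
  have h1 : i ≤ p.1 i := hmono.le_apply
  have h2 : i ≤ (p.1⁻¹ : Equiv.Perm (Fin n)) i := hinvmono.le_apply
  have h3 : p.1 i ≤ i := by
    have h4 := hmono.monotone h2
    simp only [Equiv.Perm.coe_inv, Equiv.apply_symm_apply] at h4
    exact h4
  simp only [Equiv.Perm.one_apply]
  exact le_antisymm h3 h1

end Assembly

section Assembly2

variable {n : ℕ}

lemma swapped_small (σ : Equiv.Perm (Fin n)) (π : Fin n → List Pt)
    (hsp : ∀ i, IsSmallPath (Apt n i) (Bpt n (σ i)) (π i)) (h : Intersecting (Apt n) π)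
    (i : Fin n) :
    IsSmallPath (Apt n i)
      (Bpt n ((σ * Equiv.swap (iMin (Apt n) π h) (jMax (Apt n) π h)) i))
      (swapped (Apt n) π h i) := by
  by_cases hi : i = iMin (Apt n) π h
  · subst hi
    rw [swapped_apply_i]
    have he : (σ * Equiv.swap (iMin (Apt n) π h) (jMax (Apt n) π h)) (iMin (Apt n) π h) =
        σ (jMax (Apt n) π h) := by
      simp [Equiv.Perm.mul_apply, Equiv.swap_apply_left]
    rw [he]
    exact (hsp _).swap (hsp _) (kMin_le _ _ h) (mMin_le _ _ h) (mMin_spec _ _ h).symm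
  · by_cases hj : i = jMax (Apt n) π h
    · subst hj
      rw [swapped_apply_j]
      have he : (σ * Equiv.swap (iMin (Apt n) π h) (jMax (Apt n) π h)) (jMax (Apt n) π h) =
          σ (iMin (Apt n) π h) := by
        simp [Equiv.Perm.mul_apply, Equiv.swap_apply_right]
      rw [he]
      exact (hsp _).swap (hsp _) (mMin_le _ _ h) (kMin_le _ _ h) (mMin_spec _ _ h)
    · rw [swapped_apply_other _ _ h hi hj]
      have he : (σ * Equiv.swap (iMin (Apt n) π h) (jMax (Apt n) π h)) i = σ i := by
        simp [Equiv.Perm.mul_apply, Equiv.swap_apply_of_ne_of_ne hi hj]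
      rw [he]
      exact hsp i

noncomputable def flipX (p : SysX n) (hp : BadX p) : SysX n :=
  ⟨p.1 * Equiv.swap (iMin (Apt n) (fun i => (p.2 i).1) hp) (jMax (Apt n) (fun i => (p.2 i).1) hp),
   fun i => ⟨swapped (Apt n) (fun i => (p.2 i).1) hp i,
     swapped_small p.1 (fun i => (p.2 i).1) (fun i => (p.2 i).2) hp i⟩⟩

lemma flipX_bad (p : SysX n) (hp : BadX p) : BadX (flipX p hp) :=
  swapped_intersecting (Apt n) (fun i => (p.2 i).1) hp

lemma flipX_sign (p : SysX n) (hp : BadX p) :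
    Equiv.Perm.sign (flipX p hp).1 = - Equiv.Perm.sign p.1 := by
  have hne : iMin (Apt n) (fun i => (p.2 i).1) hp ≠ jMax (Apt n) (fun i => (p.2 i).1) hp :=
    (iMin_lt_jMax _ _ hp).ne
  simp [flipX, Equiv.Perm.sign_swap hne]

lemma flipX_ne (p : SysX n) (hp : BadX p) : flipX p hp ≠ p := by
  intro he
  have h1 : (flipX p hp).1 = p.1 := congrArg Sigma.fst he
  have h2 := congrArg (fun e : Equiv.Perm (Fin n) => e (iMin (Apt n) (fun i => (p.2 i).1) hp)) h1
  simp only [flipX, Equiv.Perm.mul_apply, Equiv.swap_apply_left] at h2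
  have := p.1.injective h2
  exact (iMin_lt_jMax _ _ hp).ne' this

lemma flipX_flipX (p : SysX n) (hp : BadX p) (hp2 : BadX (flipX p hp)) :
    flipX (flipX p hp) hp2 = p := by
  set π := fun i => (p.2 i).1 with hπ
  have hst : ∀ i, StepsOK (π i) := fun i => (p.2 i).2.steps
  apply sysX_ext
  · have e1 : iMin (Apt n) (fun i => ((flipX p hp).2 i).1) hp2 = iMin (Apt n) π hp :=
      iMin_swapped (Apt n) π hp
    have e2 : jMax (Apt n) (fun i => ((flipX p hp).2 i).1) hp2 = jMax (Apt n) π hp :=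
      jMax_swapped (Apt n) π hst hp
    show (flipX p hp).1 * Equiv.swap _ _ = p.1
    rw [e1, e2]
    show p.1 * Equiv.swap _ _ * Equiv.swap _ _ = p.1
    rw [mul_assoc, Equiv.swap_mul_self, mul_one]
  · intro i
    exact congrFun (swapped_swapped (Apt n) π hst hp) i

lemma bad_sum_zero :
    ∑ p ∈ Finset.univ.filter (fun p : SysX n => BadX p), ((Equiv.Perm.sign p.1 : ℤ)) = 0 := by
  refine Finset.sum_involution (fun p hp => flipX p (by simpa using hp)) ?_ ?_ ?_ ?_
  · intro p hp
    rw [flipX_sign p (by simpa using hp)]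
    simp
  · intro p hp _
    exact flipX_ne p (by simpa using hp)
  · intro p hp
    simp only [Finset.mem_filter, Finset.mem_univ, true_and]
    exact flipX_bad p (by simpa using hp)
  · intro p hp
    exact flipX_flipX p _ _

end Assembly2

section Assembly3

variable {n : ℕ}

noncomputable def goodEquiv : {p : SysX n // ¬ BadX p} ≃ ↥(OmegaSet n) where
  toFun q := ⟨fun i => (q.1.2 i).1, by
    constructor
    · intro i
      have e' : q.1.1 i = i := by rw [good_perm_eq_one q.1 q.2]; rfl
      rcases h' : q.1.2 i with ⟨l, hl⟩
      rw [e'] at hl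
      simp only [h']
      exact hl
    · intro i j hij v hv1 hv2
      exact q.2 ⟨i, j, Ne.symm hij, v, hv1, hv2⟩⟩
  invFun ω := ⟨⟨1, fun i => ⟨ω.1 i, ω.2.1 i⟩⟩, by
    rintro ⟨i, j, hj, v, hv1, hv2⟩
    exact ω.2.2 i j (Ne.symm hj) v hv1 hv2⟩
  left_inv q := by
    apply Subtype.ext
    apply sysX_ext
    · exact (good_perm_eq_one q.1 q.2).symm
    · intro i; rfl
  right_inv ω := rfl

lemma good_sum_eq :
    ∑ p ∈ Finset.univ.filter (fun p : SysX n => ¬ BadX p), ((Equiv.Perm.sign p.1 : ℤ)) =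
      (Nat.card ↥(OmegaSet n) : ℤ) := by
  have h1 : ∀ p ∈ Finset.univ.filter (fun p : SysX n => ¬ BadX p),
      ((Equiv.Perm.sign p.1 : ℤ)) = 1 := by
    intro p hp
    rw [good_perm_eq_one p (by simpa using hp)]
    simp
  rw [Finset.sum_congr rfl h1, Finset.sum_const, nsmul_eq_mul, mul_one]
  congr 1
  rw [← Fintype.card_subtype, ← Nat.card_eq_fintype_card]
  exact Nat.card_congr goodEquiv

lemma sum_sysX :
    (∑ p : SysX n, ((Equiv.Perm.sign p.1 : ℤ))) =
      ∑ σ : Equiv.Perm (Fin n), (Fintype.card (Tup n σ) : ℤ) * (Equiv.Perm.sign σ : ℤ) := by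
  rw [← Finset.univ_sigma_univ, Finset.sum_sigma]
  apply Finset.sum_congr rfl
  intro σ _
  have hc : ∀ s : Tup n σ, ((Equiv.Perm.sign (Sigma.mk σ s).1 : ℤ)) = (Equiv.Perm.sign σ : ℤ) :=
    fun s => rfl
  rw [Finset.sum_congr rfl (fun s _ => hc s), Finset.sum_const, Finset.card_univ, nsmul_eq_mul]

lemma det_eq_sum :
    (Matrix.of fun i j : Fin n => (schS ((i : ℕ) + (j : ℕ) + 1) : ℤ)).det =
      ∑ p : SysX n, ((Equiv.Perm.sign p.1 : ℤ)) := by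
  rw [Matrix.det_apply, sum_sysX]
  apply Finset.sum_congr rfl
  intro σ _
  have hprod : (∏ i : Fin n,
      (Matrix.of fun i j : Fin n => (schS ((i : ℕ) + (j : ℕ) + 1) : ℤ)) (σ i) i) =
      (Fintype.card (Tup n σ) : ℤ) := by
    rw [← Nat.card_eq_fintype_card, Nat.card_pi, Nat.cast_prod]
    apply Finset.prod_congr rfl
    intro i _
    rw [Matrix.of_apply]
    rw [show ((σ i : ℕ)) + (i : ℕ) + 1 = (i : ℕ) + ((σ i : ℕ)) + 1 by omega]
    rw [schS_eq_card i (σ i)]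
  rw [hprod]
  simp [Units.smul_def, mul_comm]

theorem main' (n : ℕ) :
    (Matrix.of fun i j : Fin n => (schS ((i : ℕ) + (j : ℕ) + 1) : ℤ)).det =
      (Nat.card ↥(OmegaSet n) : ℤ) := by
  rw [det_eq_sum, ← Finset.sum_filter_add_sum_filter_not Finset.univ (fun p : SysX n => BadX p),
    bad_sum_zero, zero_add, good_sum_eq]

end Assembly3

/-- For `n ≥ 1`, the Hankel determinant `det [s_{i+j-1}]` of the small Schröder
numbers equals `|Ω_n|`. -/
theorem hankel_small_det_eq_card_omega (n : ℕ) (hn : 1 ≤ n) :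
    (Matrix.of fun i j : Fin n => (schS ((i : ℕ) + (j : ℕ) + 1) : ℤ)).det =
      (Nat.card ↥(OmegaSet n) : ℤ) := main' n
end

section
/- For n ≥ 1, the Hankel determinant det[s_{i+j-1}]_{1≤i,j≤n} of the small Schröder numbers equals 2^{n(n-1)/2}. -/
open Matrix

/-- Weighted Motzkin path counts: level weight 3, up weight 1, down weight 2. -/
def PP : ℕ → ℕ → ℕ → ℤ
  | 0, i, j => if i = j then 1 else 0
  | k+1, i, j => (if j = 0 then 0 else PP k i (j-1)) + 3 * PP k i j + 2 * PP k i (j+1)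

lemma PP_succ (k i j : ℕ) :
    PP (k+1) i j = (if j = 0 then 0 else PP k i (j-1)) + 3 * PP k i j + 2 * PP k i (j+1) := rfl

lemma PP_left (k i j : ℕ) :
    PP (k+1) i j = 2 * (if i = 0 then 0 else PP k (i-1) j) + 3 * PP k i j + PP k (i+1) j := by
  induction k generalizing i j with
  | zero =>
    rcases i with _|i <;> rcases j with _|j <;> simp [PP] <;> split_ifs <;> omega
  | succ k ih =>
    conv_lhs => rw [PP_succ]; simp only [ih]
    conv_rhs => simp only [PP_succ]
    rcases i with _|i <;> rcases j with _|j <;>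
      simp only [Nat.succ_sub_one, Nat.succ_ne_zero, ite_false, ite_true, if_neg, if_pos,
        reduceIte] <;> ring

lemma PP_vanish : ∀ k i j : ℕ, i + k < j ∨ j + k < i → PP k i j = 0 := by
  intro k
  induction k with
  | zero => intro i j h; simp only [PP]; rw [if_neg]; omega
  | succ k ih =>
    intro i j h
    rw [PP_succ]
    rcases j with _|j
    · rw [ih i (0+1) (by omega), ih i 0 (by omega)]; simp
    · rw [if_neg (Nat.succ_ne_zero j), Nat.succ_sub_one,
        ih i j (by omega), ih i (j+1) (by omega), ih i (j+2) (by omega)]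
      ring

lemma PP_diag : ∀ k i : ℕ, PP k i (i + k) = 1 := by
  intro k
  induction k with
  | zero => intro i; simp [PP]
  | succ k ih =>
    intro i
    rw [PP_succ, if_neg (by omega), show i + (k+1) - 1 = i + k from by omega,
      ih i, PP_vanish k i (i+(k+1)) (by omega), PP_vanish k i (i+(k+1)+1) (by omega)]
    ring

lemma PP_symm : ∀ k i j : ℕ, 2^j * PP k i j = 2^i * PP k j i := by
  intro k
  induction k with
  | zero =>
    intro i j
    by_cases h : i = j
    · subst h; rfl
    · simp only [PP]; rw [if_neg h, if_neg (Ne.symm h)]; ring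
  | succ k ih =>
    intro i j
    rw [PP_succ, PP_left]
    rcases j with _|j
    · simp only [reduceIte, zero_add]
      linear_combination 3 * ih i 0 + ih i 1
    · rw [if_neg (Nat.succ_ne_zero j), if_neg (Nat.succ_ne_zero j), Nat.succ_sub_one]
      linear_combination 2 * ih i j + 3 * ih i (j+1) + ih i (j+1+1)

lemma PP_chapman (a : ℕ) : ∀ b i j : ℕ,
    PP (a + b) i j = ∑ h ∈ Finset.range (i + a + 1), PP a i h * PP b h j := by
  intro b
  induction b with
  | zero =>
    intro i j
    by_cases hj : j ≤ i + a
    · rw [Finset.sum_eq_single j]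
      · simp [PP]
      · intro h _ hne
        have : PP 0 h j = 0 := by simp only [PP]; rw [if_neg hne]
        rw [this, mul_zero]
      · intro h; simp at h; omega
    · rw [Nat.add_zero, PP_vanish a i j (by omega)]
      rw [Finset.sum_eq_zero]
      intro h hh; simp at hh
      have : PP 0 h j = 0 := by simp only [PP]; rw [if_neg (by omega)]
      rw [this, mul_zero]
  | succ b ih =>
    intro i j
    rw [show a + (b+1) = (a + b) + 1 from rfl, PP_succ]
    have expand : ∀ h : ℕ, PP a i h * PP (b+1) h j =
        (if j = 0 then (0:ℤ) else PP a i h * PP b h (j-1)) + 3 * (PP a i h * PP b h j)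
          + 2 * (PP a i h * PP b h (j+1)) := by
      intro h; rw [PP_succ]
      split_ifs <;> ring
    rw [Finset.sum_congr rfl (fun h _ => expand h)]
    rw [Finset.sum_add_distrib, Finset.sum_add_distrib, ← Finset.mul_sum, ← Finset.mul_sum]
    rw [← ih i j, ← ih i (j+1)]
    by_cases hj : j = 0
    · simp only [if_pos hj, Finset.sum_const_zero]
    · simp only [if_neg hj]
      rw [← ih i (j-1)]

lemma PP_fv : ∀ k i : ℕ, 1 ≤ i →
    PP k i 0 = ∑ m ∈ Finset.range k, 2 * PP m (i-1) 0 * PP (k-1-m) 0 0 := by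
  intro k
  induction k with
  | zero => intro i hi; rw [PP_vanish 0 i 0 (by omega)]; simp
  | succ k ih =>
    intro i hi
    rw [Finset.sum_range_succ']
    have hterm : ∀ m ∈ Finset.range k,
        2 * PP (m+1) (i-1) 0 * PP (k+1-1-(m+1)) 0 0 =
          2 * (2 * (if i-1 = 0 then (0:ℤ) else PP m (i-1-1) 0) * PP (k-1-m) 0 0)
          + 3 * (2 * PP m (i-1) 0 * PP (k-1-m) 0 0)
          + (2 * PP m i 0 * PP (k-1-m) 0 0) := by
      intro m hm
      rw [PP_left, show k+1-1-(m+1) = k-1-m from by omega, show i-1+1 = i from by omega]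
      ring
    rw [Finset.sum_congr rfl hterm]
    rw [Finset.sum_add_distrib, Finset.sum_add_distrib, ← Finset.mul_sum, ← Finset.mul_sum]
    have lhs : PP (k+1) i 0
        = 2 * (if i = 0 then (0:ℤ) else PP k (i-1) 0) + 3 * PP k i 0 + PP k (i+1) 0 :=
      PP_left k i 0
    rcases Nat.lt_or_ge i 2 with h2 | h2
    · have h1 : i = 1 := by omega
      subst h1
      have i1 := ih 1 le_rfl
      have i2 := ih (1+1) (by norm_num)
      rw [if_neg one_ne_zero] at lhs
      simp only [show (1:ℕ)-1 = 0 from rfl, show (1:ℕ)+1-1 = 1 from rfl] at i1 i2 lhs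
      simp only [show (1:ℕ)-1 = 0 from rfl, if_pos rfl, eq_self_iff_true, if_true, mul_zero, zero_mul,
        Finset.sum_const_zero]
      rw [show k+1-1-0 = k from by omega, show PP 0 0 0 = (1:ℤ) from rfl]
      linear_combination lhs + 3 * i1 + i2
    · rw [if_neg (by omega)] at lhs
      have e1 : ∑ m ∈ Finset.range k, 2 * PP m (i-1-1) 0 * PP (k-1-m) 0 0 = PP k (i-1) 0 :=
        (ih (i-1) (by omega)).symm
      have e3 : ∑ m ∈ Finset.range k, 2 * PP m i 0 * PP (k-1-m) 0 0 = PP k (i+1) 0 := by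
        rw [ih (i+1) (by omega), show i+1-1 = i from by omega]
      have e2 : ∑ m ∈ Finset.range k, 2 * PP m (i-1) 0 * PP (k-1-m) 0 0 = PP k i 0 :=
        (ih i (by omega)).symm
      have h0 : 2 * PP 0 (i-1) 0 * PP (k+1-1-0) 0 0 = 0 := by
        have : PP 0 (i-1) 0 = 0 := by simp only [PP]; rw [if_neg (by omega)]
        rw [this]; ring
      rw [h0, lhs]
      simp only [if_neg (show ¬ (i-1 = 0) from by omega)]
      rw [e1, e2, e3]
      ring

lemma PP_quad (k : ℕ) :
    PP (k+1) 0 0 = 3 * PP k 0 0 + ∑ m ∈ Finset.range k, 2 * PP m 0 0 * PP (k-1-m) 0 0 := by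
  have h := PP_fv k 1 le_rfl
  simp only [show (1:ℕ)-1 = 0 from rfl] at h
  rw [PP_left, if_pos rfl, h]
  ring

/-- value of the small Schröder number, shifted. -/
noncomputable def sval : ℕ → ℤ := fun k => if k = 0 then 1 else PP (k-1) 0 0

/-- value of the large Schröder number, shifted. -/
noncomputable def rval : ℕ → ℤ := fun k => if k = 0 then 1 else 2 * PP (k-1) 0 0

lemma sval_identity (k : ℕ) :
    ∑ j ∈ Finset.range (k+1), rval j * sval (k-j) = sval (k+1) := by
  rcases k with _|k
  · simp [sval, rval, PP]
  · rw [Finset.sum_range_succ, Finset.sum_range_succ']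
    have hmid : ∀ j ∈ Finset.range k,
        rval (j+1) * sval (k+1-(j+1)) = 2 * PP j 0 0 * PP (k-1-j) 0 0 := by
      intro j hj
      simp only [Finset.mem_range] at hj
      rw [show k+1-(j+1) = k-j from by omega]
      simp only [rval, sval, Nat.add_sub_cancel, if_neg (Nat.succ_ne_zero j),
        if_neg (show ¬ (k-j = 0) from by omega)]
      rw [show k-j-1 = k-1-j from by omega]
    rw [Finset.sum_congr rfl hmid]
    simp only [sval, rval, Nat.add_sub_cancel, Nat.sub_self, eq_self_iff_true, if_true,
      if_neg (Nat.succ_ne_zero k), if_neg (Nat.succ_ne_zero (k+1)), if_pos rfl, Nat.sub_zero]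
    linear_combination -PP_quad k

lemma rval_identity (k : ℕ) :
    rval k + ∑ j ∈ Finset.range (k+1), rval j * rval (k-j) = rval (k+1) := by
  rcases k with _|k
  · simp [rval, PP]
  · rw [Finset.sum_range_succ, Finset.sum_range_succ']
    have hmid : ∀ j ∈ Finset.range k,
        rval (j+1) * rval (k+1-(j+1)) = 2 * (2 * PP j 0 0 * PP (k-1-j) 0 0) := by
      intro j hj
      simp only [Finset.mem_range] at hj
      rw [show k+1-(j+1) = k-j from by omega]
      simp only [rval, Nat.add_sub_cancel, if_neg (Nat.succ_ne_zero j),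
        if_neg (show ¬ (k-j = 0) from by omega)]
      rw [show k-j-1 = k-1-j from by omega]
      ring
    rw [Finset.sum_congr rfl hmid, ← Finset.mul_sum]
    simp only [rval, Nat.add_sub_cancel, Nat.sub_self, eq_self_iff_true, if_true,
      if_neg (Nat.succ_ne_zero k), if_neg (Nat.succ_ne_zero (k+1)), if_pos rfl, Nat.sub_zero]
    linear_combination -2 * PP_quad k

lemma hankel_entry (n i k : ℕ) (hi : i < n) :
    PP (i+k) 0 0 = ∑ j ∈ Finset.range n, PP i 0 j * 2^j * PP k 0 j := by
  rw [PP_chapman i k 0 0]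
  rw [Finset.sum_subset (Finset.range_subset_range.2 (by omega : 0 + i + 1 ≤ n))]
  · apply Finset.sum_congr rfl
    intro h _
    have hs := PP_symm k 0 h
    simp only [pow_zero, one_mul] at hs
    rw [← hs]
    ring
  · intro x _ hx
    simp only [Finset.mem_range] at hx
    rw [PP_vanish i 0 x (by omega), zero_mul]

section Comb

/-- Up step. -/
def Ust : Pt := (1, 1)
/-- Down step. -/
def Dst : Pt := (1, -1)
/-- Level step. -/
def Lst : Pt := (2, 0)

/-- All steps are Schröder steps. -/
def alph (l : List Pt) : Prop := ∀ s ∈ l, s = Ust ∨ s = Dst ∨ s = Lst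

/-- total x-displacement. -/
def sumx (l : List Pt) : ℤ := (l.map Prod.fst).sum
/-- total y-displacement. -/
def sumy (l : List Pt) : ℤ := (l.map Prod.snd).sum

/-- starting at height `y`, all intermediate heights are nonnegative. -/
def ok : ℤ → List Pt → Prop
  | _, [] => True
  | y, s :: t => 0 ≤ y + s.2 ∧ ok (y + s.2) t

/-- starting at height `y`, no level step occurs at height `0`. -/
def noL0 : ℤ → List Pt → Prop
  | _, [] => True
  | y, s :: t => (s = Lst → y ≠ 0) ∧ noL0 (y + s.2) t

@[simp] lemma sumx_nil : sumx [] = 0 := rfl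
@[simp] lemma sumx_cons (s : Pt) (l : List Pt) : sumx (s :: l) = s.1 + sumx l := by
  simp [sumx]
@[simp] lemma sumx_append (a b : List Pt) : sumx (a ++ b) = sumx a + sumx b := by
  simp [sumx]
@[simp] lemma sumy_nil : sumy [] = 0 := rfl
@[simp] lemma sumy_cons (s : Pt) (l : List Pt) : sumy (s :: l) = s.2 + sumy l := by
  simp [sumy]
@[simp] lemma sumy_append (a b : List Pt) : sumy (a ++ b) = sumy a + sumy b := by
  simp [sumy]

lemma endpt_eq : ∀ (l : List Pt) (p : Pt), endpt p l = (p.1 + sumx l, p.2 + sumy l) := by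
  intro l
  induction l with
  | nil => intro p; simp
  | cons s t ih => intro p; rw [endpt_cons, ih]; simp [Prod.ext_iff]; constructor <;> ring

@[simp] lemma ok_nil (y : ℤ) : ok y [] := trivial
lemma ok_cons (y : ℤ) (s : Pt) (t : List Pt) : ok y (s :: t) ↔ 0 ≤ y + s.2 ∧ ok (y + s.2) t :=
  Iff.rfl
@[simp] lemma noL0_nil (y : ℤ) : noL0 y [] := trivial
lemma noL0_cons (y : ℤ) (s : Pt) (t : List Pt) :
    noL0 y (s :: t) ↔ (s = Lst → y ≠ 0) ∧ noL0 (y + s.2) t := Iff.rfl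

lemma ok_congr {y y' : ℤ} (l : List Pt) (h : y = y') : ok y l ↔ ok y' l := by rw [h]
lemma noL0_congr {y y' : ℤ} (l : List Pt) (h : y = y') : noL0 y l ↔ noL0 y' l := by rw [h]

lemma ok_append : ∀ (a b : List Pt) (y : ℤ), ok y (a ++ b) ↔ ok y a ∧ ok (y + sumy a) b := by
  intro a
  induction a with
  | nil => intro b y; simp
  | cons s t ih =>
    intro b y
    rw [List.cons_append, ok_cons, ih, ok_cons]
    rw [ok_congr b (show y + sumy (s :: t) = y + s.2 + sumy t from by simp; ring)]
    tauto

lemma noL0_append : ∀ (a b : List Pt) (y : ℤ),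
    noL0 y (a ++ b) ↔ noL0 y a ∧ noL0 (y + sumy a) b := by
  intro a
  induction a with
  | nil => intro b y; simp
  | cons s t ih =>
    intro b y
    rw [List.cons_append, noL0_cons, ih, noL0_cons]
    rw [noL0_congr b (show y + sumy (s :: t) = y + s.2 + sumy t from by simp; ring)]
    tauto

lemma ok_mono : ∀ (l : List Pt) (y y' : ℤ), y ≤ y' → ok y l → ok y' l := by
  intro l
  induction l with
  | nil => intro y y' _ _; trivial
  | cons s t ih =>
    intro y y' hle h
    rw [ok_cons] at h ⊢
    exact ⟨by omega, ih _ _ (by omega) h.2⟩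

lemma noL0_pos : ∀ (l : List Pt) (y : ℤ), 0 < y → ok (y - 1) l → noL0 y l := by
  intro l
  induction l with
  | nil => intro y _ _; trivial
  | cons s t ih =>
    intro y hy h
    rw [ok_cons] at h
    rw [noL0_cons]
    refine ⟨fun _ => by omega, ih _ (by omega) ?_⟩
    rw [ok_congr t (show y + s.2 - 1 = y - 1 + s.2 from by ring)]
    exact h.2

lemma pts_nonneg_iff : ∀ (l : List Pt) (p : Pt),
    (∀ v ∈ pts p l, 0 ≤ v.2) ↔ (0 ≤ p.2 ∧ ok p.2 l) := by
  intro l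
  induction l with
  | nil => intro p; simp [pts]
  | cons s t ih =>
    intro p
    have hp : pts p (s :: t) = p :: pts (p + s) t := by
      simp [pts, List.scanl_cons]
    rw [hp]
    constructor
    · intro h
      have h1 := h p (by simp)
      have h2 := (ih (p + s)).1 (fun v hv => h v (by simp [hv]))
      refine ⟨h1, ?_, ?_⟩
      · have := h2.1; simpa using this
      · have := h2.2
        rwa [ok_congr t (show (p + s).2 = p.2 + s.2 from rfl)] at this
    · rintro ⟨h0, hs, hok⟩
      intro v hv
      rcases List.mem_cons.1 hv with rfl | hv
      · exact h0
      · refine ((ih (p + s)).2 ⟨?_, ?_⟩) v hv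
        · simpa using hs
        · rwa [ok_congr t (show p.2 + s.2 = (p + s).2 from rfl)] at hok

lemma isLargePath_iff (p q : Pt) (l : List Pt) :
    IsLargePath p q l ↔ alph l ∧ (0 ≤ p.2 ∧ ok p.2 l) ∧ endpt p l = q := by
  unfold IsLargePath alph Ust Dst Lst
  rw [pts_nonneg_iff]

lemma small_snd_iff : ∀ (l : List Pt) (p : Pt),
    (∀ (i : ℕ) (h : i < l.length), l.get ⟨i, h⟩ = (2, 0) → (endpt p (l.take i)).2 ≠ 0) ↔
      noL0 p.2 l := by
  intro l
  induction l with
  | nil => intro p; simp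
  | cons s t ih =>
    intro p
    rw [noL0_cons]
    constructor
    · intro h
      constructor
      · intro hs
        have := h 0 (by simp) (by simpa [Lst] using hs)
        simpa using this
      · rw [show p.2 + s.2 = (p + s).2 from rfl, ← ih (p + s)]
        intro i hi hg
        have := h (i + 1) (by simpa using hi) (by simpa using hg)
        rwa [List.take_succ_cons, endpt_cons] at this
    · rintro ⟨h0, ht⟩
      intro i hi hg
      cases i with
      | zero =>
        simp only [List.take_zero, endpt_nil]
        apply h0
        simpa [Lst] using hg
      | succ i =>
        rw [List.take_succ_cons, endpt_cons]
        rw [show p.2 + s.2 = (p + s).2 from rfl, ← ih (p + s)] at ht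
        exact ht i (by simpa using hi) (by simpa using hg)

lemma isSmallPath_iff (p q : Pt) (l : List Pt) :
    IsSmallPath p q l ↔ IsLargePath p q l ∧ noL0 p.2 l := by
  unfold IsSmallPath
  rw [small_snd_iff]

end Comb

section Comb2

lemma Ust_ne_Dst : Ust ≠ Dst := by simp [Ust, Dst, Prod.ext_iff]
lemma Ust_ne_Lst : Ust ≠ Lst := by simp [Ust, Lst, Prod.ext_iff]
lemma Dst_ne_Lst : Dst ≠ Lst := by simp [Dst, Lst, Prod.ext_iff]

/-- encode a step as an element of `Fin 3`. -/
def scode (s : Pt) : Fin 3 := if s = Ust then 0 else if s = Dst then 1 else 2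
/-- decode. -/
def sdecode (i : Fin 3) : Pt := if i = 0 then Ust else if i = 1 then Dst else Lst

lemma sdecode_scode {s : Pt} (h : s = Ust ∨ s = Dst ∨ s = Lst) : sdecode (scode s) = s := by
  rcases h with rfl | rfl | rfl
  · simp [scode, sdecode]
  · simp [scode, sdecode, Ust_ne_Dst.symm]
  · simp [scode, sdecode, Ust_ne_Lst.symm, Dst_ne_Lst.symm]

lemma roundtrip : ∀ l : List Pt, alph l → (l.map scode).map sdecode = l := by
  intro l
  induction l with
  | nil => intro _; simp
  | cons s t ih =>
    intro h
    simp only [List.map_cons, List.cons.injEq]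
    exact ⟨sdecode_scode (h s (by simp)), ih (fun x hx => h x (by simp [hx]))⟩

lemma sumx_nonneg : ∀ l : List Pt, alph l → 0 ≤ sumx l := by
  intro l
  induction l with
  | nil => intro _; simp
  | cons s t ih =>
    intro h
    have hs := h s (by simp)
    have ht := ih (fun x hx => h x (by simp [hx]))
    rcases hs with rfl | rfl | rfl <;> simp [Ust, Dst, Lst] <;> omega

lemma length_le_sumx : ∀ l : List Pt, alph l → (l.length : ℤ) ≤ sumx l := by
  intro l
  induction l with
  | nil => intro _; simp
  | cons s t ih =>
    intro h
    have hs := h s (by simp)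
    have ht := ih (fun x hx => h x (by simp [hx]))
    rcases hs with rfl | rfl | rfl <;> simp [Ust, Dst, Lst] <;> push_cast <;> omega

lemma alph_parity : ∀ l : List Pt, alph l → ∃ m : ℕ, sumx l = 2 * m + sumy l := by
  intro l
  induction l with
  | nil => intro _; exact ⟨0, by simp⟩
  | cons s t ih =>
    intro h
    obtain ⟨m, hm⟩ := ih (fun x hx => h x (by simp [hx]))
    have hs := h s (by simp)
    rcases hs with rfl | rfl | rfl
    · exact ⟨m, by simp [Ust]; push_cast; omega⟩
    · exact ⟨m + 1, by simp [Dst]; push_cast; omega⟩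
    · exact ⟨m + 1, by simp [Lst]; push_cast; omega⟩

lemma eq_nil_of_sumx_eq_zero : ∀ l : List Pt, alph l → sumx l = 0 → l = [] := by
  intro l hl hx
  cases l with
  | nil => rfl
  | cons s t =>
    exfalso
    have hs := hl s (by simp)
    have ht := sumx_nonneg t (fun x hx => hl x (by simp [hx]))
    rcases hs with rfl | rfl | rfl <;> simp [Ust, Dst, Lst] at hx <;> omega

end Comb2

section Comb3

/-- normalized large paths of semilength `k`. -/
def LSet (k : ℕ) : Type := {l : List Pt // alph l ∧ ok 0 l ∧ sumx l = 2*k ∧ sumy l = 0}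

/-- normalized small paths of semilength `k`. -/
def SmSet (k : ℕ) : Type :=
  {l : List Pt // alph l ∧ ok 0 l ∧ noL0 0 l ∧ sumx l = 2*k ∧ sumy l = 0}

lemma schR_eq (k : ℕ) : schR k = Nat.card (LSet k) := by
  apply Nat.card_congr
  apply Equiv.subtypeEquivRight
  intro l
  rw [isLargePath_iff, endpt_eq]
  simp only [Prod.mk.injEq, Prod.snd]
  constructor
  · rintro ⟨ha, ⟨_, hok⟩, hx, hy⟩
    exact ⟨ha, hok, by omega, by omega⟩
  · rintro ⟨ha, hok, hx, hy⟩
    exact ⟨ha, ⟨le_refl 0, hok⟩, by omega, by omega⟩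

lemma schS_eq (k : ℕ) : schS k = Nat.card (SmSet k) := by
  apply Nat.card_congr
  apply Equiv.subtypeEquivRight
  intro l
  rw [isSmallPath_iff, isLargePath_iff, endpt_eq]
  simp only [Prod.mk.injEq, Prod.snd]
  constructor
  · rintro ⟨⟨ha, ⟨_, hok⟩, hx, hy⟩, hn⟩
    exact ⟨ha, hok, hn, by omega, by omega⟩
  · rintro ⟨ha, hok, hn, hx, hy⟩
    exact ⟨⟨ha, ⟨le_refl 0, hok⟩, by omega, by omega⟩, hn⟩

noncomputable instance (k : ℕ) : Finite (LSet k) := by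
  have hfin : Finite {l : List (Fin 3) // l.length ≤ 2*k} :=
    (List.finite_length_le (Fin 3) (2*k)).to_subtype
  apply Finite.of_injective
    (fun x : LSet k => (⟨x.1.map scode, by
      have := length_le_sumx x.1 x.2.1
      have hx := x.2.2.2.1
      simp only [List.length_map]
      omega⟩ : {l : List (Fin 3) // l.length ≤ 2*k}))
  intro x y hxy
  apply Subtype.ext
  have h1 : (x.1.map scode) = (y.1.map scode) := congrArg Subtype.val hxy
  have := congrArg (List.map sdecode) h1
  rwa [roundtrip x.1 x.2.1, roundtrip y.1 y.2.1] at this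

noncomputable instance (k : ℕ) : Finite (SmSet k) := by
  have hfin : Finite {l : List (Fin 3) // l.length ≤ 2*k} :=
    (List.finite_length_le (Fin 3) (2*k)).to_subtype
  apply Finite.of_injective
    (fun x : SmSet k => (⟨x.1.map scode, by
      have := length_le_sumx x.1 x.2.1
      have hx := x.2.2.2.2.1
      simp only [List.length_map]
      omega⟩ : {l : List (Fin 3) // l.length ≤ 2*k}))
  intro x y hxy
  apply Subtype.ext
  have h1 : (x.1.map scode) = (y.1.map scode) := congrArg Subtype.val hxy
  have := congrArg (List.map sdecode) h1
  rwa [roundtrip x.1 x.2.1, roundtrip y.1 y.2.1] at this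

lemma LSet_zero_unique (x : LSet 0) : x.1 = [] :=
  eq_nil_of_sumx_eq_zero x.1 x.2.1 (by have := x.2.2.2.1; omega)

lemma SSet_zero_unique (x : SmSet 0) : x.1 = [] :=
  eq_nil_of_sumx_eq_zero x.1 x.2.1 (by have := x.2.2.2.2.1; omega)

lemma schR_zero : schR 0 = 1 := by
  rw [schR_eq]
  haveI : Unique (LSet 0) :=
    { default := ⟨[], by refine ⟨?_, trivial, by simp, by simp⟩; intro s hs; simp at hs⟩
      uniq := fun x => Subtype.ext (LSet_zero_unique x) }
  exact Nat.card_unique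

lemma schS_zero : schS 0 = 1 := by
  rw [schS_eq]
  haveI : Unique (SmSet 0) :=
    { default := ⟨[], by refine ⟨?_, trivial, trivial, by simp, by simp⟩; intro s hs; simp at hs⟩
      uniq := fun x => Subtype.ext (SSet_zero_unique x) }
  exact Nat.card_unique

end Comb3

section Split

lemma split_exists : ∀ (t : List Pt) (h : ℤ), 1 ≤ h → alph t → ok h t → h + sumy t = 0 →
    ∃ a b : List Pt, t = a ++ Dst :: b ∧ alph a ∧ alph b ∧
      ok (h - 1) a ∧ (h - 1) + sumy a = 0 ∧ ok 0 b ∧ sumy b = 0 := by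
  intro t
  induction t with
  | nil => intro h h1 _ _ hend; simp at hend; omega
  | cons s r ih =>
    intro h h1 ha hok hend
    rw [ok_cons] at hok
    have har : alph r := fun x hx => ha x (by simp [hx])
    have has := ha s (by simp)
    rw [sumy_cons] at hend
    by_cases hz : h + s.2 = 0
    · have hsD : s = Dst := by
        rcases has with rfl | rfl | rfl
        · exfalso; simp [Ust] at hz; omega
        · rfl
        · exfalso; simp [Lst] at hz; omega
      subst hsD
      have h1' : h = 1 := by simp [Dst] at hz; omega
      refine ⟨[], r, by simp, fun x hx => by simp at hx, har, trivial, by simp; omega, ?_, ?_⟩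
      · exact (ok_congr r (by omega)).1 hok.2
      · simp [Dst] at hend ⊢; omega
    · have h1' : 1 ≤ h + s.2 := by omega
      obtain ⟨a, b, hteq, haa, hab, hoka, hsuma, hokb, hsumb⟩ :=
        ih (h + s.2) h1' har hok.2 (by omega)
      refine ⟨s :: a, b, by rw [hteq, List.cons_append], ?_, hab, ?_, ?_, hokb, hsumb⟩
      · intro x hx
        rcases List.mem_cons.1 hx with rfl | hx
        · exact has
        · exact haa x hx
      · rw [ok_cons]
        refine ⟨by omega, ?_⟩
        exact (ok_congr a (by ring)).1 hoka
      · rw [sumy_cons]; omega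

lemma split_unique : ∀ (a : List Pt) (h : ℤ) (a' b b' : List Pt),
    ok (h - 1) a → ok (h - 1) a' → (h - 1) + sumy a = 0 → (h - 1) + sumy a' = 0 →
    a ++ Dst :: b = a' ++ Dst :: b' → a = a' ∧ b = b' := by
  intro a
  induction a with
  | nil =>
    intro h a' b b' _ hok2 hsum1 _ heq
    cases a' with
    | nil => simp at heq; exact ⟨rfl, heq⟩
    | cons s t' =>
      exfalso
      simp only [List.nil_append, List.cons_append, List.cons.injEq] at heq
      obtain ⟨rfl, _⟩ := heq
      rw [ok_cons] at hok2
      have := hok2.1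
      simp only [sumy_nil] at hsum1
      simp [Dst] at this
      omega
  | cons s t ih =>
    intro h a' b b' hok1 hok2 hsum1 hsum2 heq
    cases a' with
    | nil =>
      exfalso
      simp only [List.nil_append, List.cons_append, List.cons.injEq] at heq
      obtain ⟨rfl, _⟩ := heq
      rw [ok_cons] at hok1
      have := hok1.1
      simp only [sumy_nil] at hsum2
      simp [Dst] at this
      omega
    | cons s' t' =>
      simp only [List.cons_append, List.cons.injEq] at heq
      obtain ⟨rfl, heq⟩ := heq
      rw [ok_cons] at hok1 hok2
      rw [sumy_cons] at hsum1 hsum2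
      have := ih (h + s.2) t' b b'
        ((ok_congr t (by ring)).1 hok1.2) ((ok_congr t' (by ring)).1 hok2.2)
        (by omega) (by omega) heq
      exact ⟨by rw [this.1], this.2⟩

end Split

section Equivs

lemma mk_alph {α β : List Pt} (ha : alph α) (hb : alph β) :
    alph (Ust :: α ++ Dst :: β) := by
  intro x hx
  simp only [List.cons_append, List.mem_cons, List.mem_append] at hx
  rcases hx with rfl | hx | rfl | hx
  · left; rfl
  · exact ha x hx
  · right; left; rfl
  · exact hb x hx

lemma mk_ok {α β : List Pt} (hoa : ok 0 α) (hsa : sumy α = 0) (hob : ok 0 β) :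
    ok 0 (Ust :: α ++ Dst :: β) := by
  rw [show Ust :: α ++ Dst :: β = Ust :: (α ++ Dst :: β) from rfl, ok_cons]
  refine ⟨by norm_num [Ust], ?_⟩
  rw [ok_congr _ (show (0:ℤ) + Ust.2 = 1 from by norm_num [Ust]), ok_append]
  refine ⟨ok_mono α 0 1 (by norm_num) hoa, ?_⟩
  rw [ok_congr _ (show (1:ℤ) + sumy α = 1 from by omega), ok_cons]
  refine ⟨by norm_num [Dst], ?_⟩
  rw [ok_congr _ (show (1:ℤ) + Dst.2 = 0 from by norm_num [Dst])]
  exact hob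

lemma mk_noL0 {α β : List Pt} (hoa : ok 0 α) (hsa : sumy α = 0) (hnb : noL0 0 β) :
    noL0 0 (Ust :: α ++ Dst :: β) := by
  rw [show Ust :: α ++ Dst :: β = Ust :: (α ++ Dst :: β) from rfl, noL0_cons]
  refine ⟨fun h => absurd h Ust_ne_Lst, ?_⟩
  rw [noL0_congr _ (show (0:ℤ) + Ust.2 = 1 from by norm_num [Ust]), noL0_append]
  refine ⟨noL0_pos α 1 one_pos ((ok_congr α (by norm_num)).2 hoa), ?_⟩
  rw [noL0_congr _ (show (1:ℤ) + sumy α = 1 from by omega), noL0_cons]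
  refine ⟨fun h => absurd h Dst_ne_Lst, ?_⟩
  rw [noL0_congr _ (show (1:ℤ) + Dst.2 = 0 from by norm_num [Dst])]
  exact hnb

lemma mk_sumx {α β : List Pt} : sumx (Ust :: α ++ Dst :: β) = 2 + sumx α + sumx β := by
  simp [Ust, Dst]; ring

lemma mk_sumy {α β : List Pt} (hsa : sumy α = 0) (hsb : sumy β = 0) :
    sumy (Ust :: α ++ Dst :: β) = 0 := by
  simp [Ust, Dst, hsa, hsb]

def sFwd (k : ℕ) : (Σ j : Fin (k+1), LSet j × SmSet (k-(j:ℕ))) → SmSet (k+1) := fun x =>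
    ⟨Ust :: x.2.1.1 ++ Dst :: x.2.2.1, by
      obtain ⟨j, α, β⟩ := x
      obtain ⟨haα, hoα, hxα, hyα⟩ := α.2
      obtain ⟨haβ, hoβ, hnβ, hxβ, hyβ⟩ := β.2
      have hj : (j:ℕ) ≤ k := Nat.lt_succ_iff.mp j.2
      refine ⟨mk_alph haα haβ, mk_ok hoα hyα hoβ, mk_noL0 hoα hyα hnβ, ?_, mk_sumy hyα hyβ⟩
      rw [mk_sumx, hxα, hxβ]
      push_cast [Nat.cast_sub hj]
      ring⟩

lemma schS_rec (k : ℕ) : schS (k+1) = ∑ j ∈ Finset.range (k+1), schR j * schS (k-j) := by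
  classical
  have hinj : Function.Injective (sFwd k) := by
    rintro ⟨j, α, β⟩ ⟨j', α', β'⟩ h
    have hv : Ust :: α.1 ++ Dst :: β.1 = Ust :: α'.1 ++ Dst :: β'.1 :=
      congrArg Subtype.val h
    simp only [List.cons_append, List.cons.injEq, true_and] at hv
    obtain ⟨haα, hoα, hxα, hyα⟩ := α.2
    obtain ⟨haα', hoα', hxα', hyα'⟩ := α'.2
    obtain ⟨hA, hB⟩ := split_unique α.1 1 α'.1 β.1 β'.1
      ((ok_congr _ (by norm_num)).2 hoα) ((ok_congr _ (by norm_num)).2 hoα')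
      (by omega) (by omega) hv
    have hjj : j = j' := by
      apply Fin.ext
      have : sumx α.1 = sumx α'.1 := by rw [hA]
      omega
    subst hjj
    have h1 : α = α' := Subtype.ext hA
    have h2 : β = β' := Subtype.ext hB
    subst h1; subst h2; rfl
  have hsurj : Function.Surjective (sFwd k) := by
    rintro ⟨l, haL, hoL, hnL, hxL, hyL⟩
    cases l with
    | nil =>
      exfalso
      simp only [sumx_nil] at hxL
      have : ((2:ℤ)) * ((k+1 : ℕ) : ℤ) = 0 := by exact_mod_cast hxL.symm
      push_cast at this; omega
    | cons s t =>
      have has := haL s (by simp)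
      have hat : alph t := fun x hx => haL x (by simp [hx])
      rcases has with rfl | rfl | rfl
      · -- s = Ust
        rw [ok_cons] at hoL
        have hot : ok 1 t := (ok_congr t (by norm_num [Ust])).1 hoL.2
        have hyt : 1 + sumy t = 0 := by
          rw [sumy_cons] at hyL; simp [Ust] at hyL ⊢; omega
        obtain ⟨a, b, hteq, haa, hab, hoa, hsa, hob, hsb⟩ :=
          split_exists t 1 le_rfl hat hot hyt
        have hoa0 : ok 0 a := (ok_congr a (by norm_num)).1 hoa
        have hsa0 : sumy a = 0 := by omega
        -- noL0 for b
        rw [noL0_cons] at hnL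
        have hnt : noL0 1 t := (noL0_congr t (by norm_num [Ust])).1 hnL.2
        rw [hteq, noL0_append] at hnt
        have hnb : noL0 0 b := by
          have := (noL0_congr _ (show (1:ℤ) + sumy a = 1 from by omega)).1 hnt.2
          rw [noL0_cons] at this
          exact (noL0_congr b (by norm_num [Dst])).1 this.2
        obtain ⟨m, hm⟩ := alph_parity a haa
        have hmeq : sumx a = 2 * (m:ℤ) := by omega
        have hbpos := sumx_nonneg b hab
        have hxt : sumx (Ust :: t) = 2 * ((k+1:ℕ):ℤ) := hxL
        rw [hteq] at hxt
        simp only [sumx_cons, sumx_append] at hxt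
        have hxt' : (1:ℤ) + (sumx a + (1 + sumx b)) = 2 * ((k:ℤ) + 1) := by
          push_cast at hxt; simp [Ust, Dst] at hxt; omega
        have hmk : m ≤ k := by omega
        have hxb : sumx b = 2 * ((k - m : ℕ) : ℤ) := by
          push_cast [Nat.cast_sub hmk]; omega
        refine ⟨⟨⟨m, Nat.lt_succ_of_le hmk⟩,
          ⟨a, haa, hoa0, hmeq, hsa0⟩, ⟨b, hab, hob, hnb, hxb, hsb⟩⟩, ?_⟩
        apply Subtype.ext
        show Ust :: a ++ Dst :: b = Ust :: t
        rw [hteq]; rfl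
      · -- s = Dst : impossible
        exfalso
        rw [ok_cons] at hoL
        have := hoL.1
        simp [Dst] at this
      · -- s = Lst : impossible for small
        exfalso
        rw [noL0_cons] at hnL
        exact hnL.1 rfl rfl
  have hcard := Nat.card_congr (Equiv.ofBijective (sFwd k) ⟨hinj, hsurj⟩)
  rw [schS_eq, ← hcard]
  letI : ∀ j : Fin (k+1), Fintype (LSet (j:ℕ) × SmSet (k-(j:ℕ))) := fun j => Fintype.ofFinite _
  rw [Nat.card_eq_fintype_card, Fintype.card_sigma,
    ← Fin.sum_univ_eq_sum_range (fun j => schR j * schS (k-j)) (k+1)]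
  apply Finset.sum_congr rfl
  intro j _
  rw [← Nat.card_eq_fintype_card, Nat.card_prod, schR_eq, schS_eq]

end Equivs

section EquivR

def rFwd (k : ℕ) : (LSet k ⊕ (Σ j : Fin (k+1), LSet j × LSet (k-(j:ℕ)))) → LSet (k+1) := fun x =>
  match x with
  | Sum.inl γ =>
    ⟨Lst :: γ.1, by
      obtain ⟨haγ, hoγ, hxγ, hyγ⟩ := γ.2
      refine ⟨?_, ?_, ?_, ?_⟩
      · intro x hx
        rcases List.mem_cons.1 hx with rfl | hx
        · right; right; rfl
        · exact haγ x hx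
      · rw [ok_cons]
        exact ⟨by norm_num [Lst], (ok_congr _ (by norm_num [Lst])).2 hoγ⟩
      · rw [sumx_cons, hxγ]; push_cast; simp [Lst]; ring
      · rw [sumy_cons, hyγ]; simp [Lst]⟩
  | Sum.inr ⟨j, α, β⟩ =>
    ⟨Ust :: α.1 ++ Dst :: β.1, by
      obtain ⟨haα, hoα, hxα, hyα⟩ := α.2
      obtain ⟨haβ, hoβ, hxβ, hyβ⟩ := β.2
      have hj : (j:ℕ) ≤ k := Nat.lt_succ_iff.mp j.2
      refine ⟨mk_alph haα haβ, mk_ok hoα hyα hoβ, ?_, mk_sumy hyα hyβ⟩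
      rw [mk_sumx, hxα, hxβ]
      push_cast [Nat.cast_sub hj]
      ring⟩

lemma schR_rec (k : ℕ) :
    schR (k+1) = schR k + ∑ j ∈ Finset.range (k+1), schR j * schR (k-j) := by
  classical
  have hinj : Function.Injective (rFwd k) := by
    rintro (γ | ⟨j, α, β⟩) (γ' | ⟨j', α', β'⟩) h
    · have hv : Lst :: γ.1 = Lst :: γ'.1 := congrArg Subtype.val h
      simp only [List.cons.injEq, true_and] at hv
      rw [show γ = γ' from Subtype.ext hv]
    · exfalso
      have hv : Lst :: γ.1 = Ust :: α'.1 ++ Dst :: β'.1 := congrArg Subtype.val h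
      simp only [List.cons_append, List.cons.injEq] at hv
      exact Ust_ne_Lst hv.1.symm
    · exfalso
      have hv : Ust :: α.1 ++ Dst :: β.1 = Lst :: γ'.1 := congrArg Subtype.val h
      simp only [List.cons_append, List.cons.injEq] at hv
      exact Ust_ne_Lst hv.1
    · have hv : Ust :: α.1 ++ Dst :: β.1 = Ust :: α'.1 ++ Dst :: β'.1 :=
        congrArg Subtype.val h
      simp only [List.cons_append, List.cons.injEq, true_and] at hv
      obtain ⟨haα, hoα, hxα, hyα⟩ := α.2
      obtain ⟨haα', hoα', hxα', hyα'⟩ := α'.2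
      obtain ⟨hA, hB⟩ := split_unique α.1 1 α'.1 β.1 β'.1
        ((ok_congr _ (by norm_num)).2 hoα) ((ok_congr _ (by norm_num)).2 hoα')
        (by omega) (by omega) hv
      have hjj : j = j' := by
        apply Fin.ext
        have : sumx α.1 = sumx α'.1 := by rw [hA]
        omega
      subst hjj
      have h1 : α = α' := Subtype.ext hA
      have h2 : β = β' := Subtype.ext hB
      subst h1; subst h2; rfl
  have hsurj : Function.Surjective (rFwd k) := by
    rintro ⟨l, haL, hoL, hxL, hyL⟩
    cases l with
    | nil =>
      exfalso
      simp only [sumx_nil] at hxL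
      have : ((2:ℤ)) * ((k+1 : ℕ) : ℤ) = 0 := by exact_mod_cast hxL.symm
      push_cast at this; omega
    | cons s t =>
      have has := haL s (by simp)
      have hat : alph t := fun x hx => haL x (by simp [hx])
      rcases has with rfl | rfl | rfl
      · -- s = Ust
        rw [ok_cons] at hoL
        have hot : ok 1 t := (ok_congr t (by norm_num [Ust])).1 hoL.2
        have hyt : 1 + sumy t = 0 := by
          rw [sumy_cons] at hyL; simp [Ust] at hyL ⊢; omega
        obtain ⟨a, b, hteq, haa, hab, hoa, hsa, hob, hsb⟩ :=
          split_exists t 1 le_rfl hat hot hyt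
        have hoa0 : ok 0 a := (ok_congr a (by norm_num)).1 hoa
        have hsa0 : sumy a = 0 := by omega
        obtain ⟨m, hm⟩ := alph_parity a haa
        have hmeq : sumx a = 2 * (m:ℤ) := by omega
        have hbpos := sumx_nonneg b hab
        have hxt : sumx (Ust :: t) = 2 * ((k+1:ℕ):ℤ) := hxL
        rw [hteq] at hxt
        simp only [sumx_cons, sumx_append] at hxt
        have hxt' : (1:ℤ) + (sumx a + (1 + sumx b)) = 2 * ((k:ℤ) + 1) := by
          push_cast at hxt; simp [Ust, Dst] at hxt; omega
        have hmk : m ≤ k := by omega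
        have hxb : sumx b = 2 * ((k - m : ℕ) : ℤ) := by
          push_cast [Nat.cast_sub hmk]; omega
        refine ⟨Sum.inr ⟨⟨m, Nat.lt_succ_of_le hmk⟩,
          ⟨a, haa, hoa0, hmeq, hsa0⟩, ⟨b, hab, hob, hxb, hsb⟩⟩, ?_⟩
        apply Subtype.ext
        show Ust :: a ++ Dst :: b = Ust :: t
        rw [hteq]; rfl
      · -- s = Dst : impossible
        exfalso
        rw [ok_cons] at hoL
        have := hoL.1
        simp [Dst] at this
      · -- s = Lst
        have hot : ok 0 t := (ok_congr t (by norm_num [Lst])).1 (hoL.2)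
        have hyt : sumy t = 0 := by
          rw [sumy_cons] at hyL; simp [Lst] at hyL; exact hyL
        have hxt : sumx t = 2 * ((k:ℕ):ℤ) := by
          rw [sumx_cons] at hxL; simp [Lst] at hxL; push_cast at hxL ⊢; omega
        refine ⟨Sum.inl ⟨t, hat, hot, hxt, hyt⟩, ?_⟩
        apply Subtype.ext
        rfl
  have hcard := Nat.card_congr (Equiv.ofBijective (rFwd k) ⟨hinj, hsurj⟩)
  rw [schR_eq, ← hcard, Nat.card_sum]
  congr 1
  · rw [schR_eq]
  letI : ∀ j : Fin (k+1), Fintype (LSet (j:ℕ) × LSet (k-(j:ℕ))) := fun j => Fintype.ofFinite _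
  rw [Nat.card_eq_fintype_card, Fintype.card_sigma,
    ← Fin.sum_univ_eq_sum_range (fun j => schR j * schR (k-j)) (k+1)]
  apply Finset.sum_congr rfl
  intro j _
  rw [← Nat.card_eq_fintype_card, Nat.card_prod, schR_eq, schR_eq]

end EquivR

section Bridge

lemma sch_val : ∀ k : ℕ, (schS k : ℤ) = sval k ∧ (schR k : ℤ) = rval k := by
  intro k
  induction k using Nat.strong_induction_on with
  | _ k ih =>
    cases k with
    | zero => simp [schS_zero, schR_zero, sval, rval]
    | succ k =>
      constructor
      · rw [schS_rec k, ← sval_identity k]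
        push_cast
        apply Finset.sum_congr rfl
        intro j hj
        simp only [Finset.mem_range] at hj
        rw [(ih j (by omega)).2, (ih (k-j) (by omega)).1]
      · rw [schR_rec k, ← rval_identity k]
        push_cast
        rw [(ih k (by omega)).2]
        congr 1
        apply Finset.sum_congr rfl
        intro j hj
        simp only [Finset.mem_range] at hj
        rw [(ih j (by omega)).2, (ih (k-j) (by omega)).2]

lemma schS_PP (m : ℕ) : (schS (m+1) : ℤ) = PP m 0 0 := by
  have := (sch_val (m+1)).1
  simpa [sval] using this

end Bridge

/-- For `n ≥ 1`, `det [s_{i+j-1}] = 2^{n(n-1)/2}`. -/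
theorem hankel_small_det (n : ℕ) (hn : 1 ≤ n) :
    (Matrix.of fun i j : Fin n => (schS ((i : ℕ) + (j : ℕ) + 1) : ℤ)).det =
      2 ^ (n * (n - 1) / 2) := by
  classical
  let A : Matrix (Fin n) (Fin n) ℤ := Matrix.of fun i j => PP (i:ℕ) 0 (j:ℕ)
  let Dg : Matrix (Fin n) (Fin n) ℤ := Matrix.diagonal fun j : Fin n => 2^(j:ℕ)
  have hM : (Matrix.of fun i j : Fin n => (schS ((i : ℕ) + (j : ℕ) + 1) : ℤ))
      = A * Dg * Aᵀ := by
    ext i k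
    rw [Matrix.mul_apply]
    simp only [Matrix.mul_diagonal, Matrix.transpose_apply, Matrix.of_apply, A, Dg]
    rw [schS_PP ((i:ℕ)+(k:ℕ)), hankel_entry n i k i.isLt,
      ← Fin.sum_univ_eq_sum_range (fun j => PP (i:ℕ) 0 j * 2^j * PP (k:ℕ) 0 j) n]
  rw [hM, Matrix.det_mul, Matrix.det_mul, Matrix.det_transpose]
  have hdetA : A.det = 1 := by
    have ht : A.BlockTriangular OrderDual.toDual := by
      intro i j hij
      exact PP_vanish (i:ℕ) 0 (j:ℕ) (Or.inl (by simpa using hij))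
    rw [Matrix.det_of_lowerTriangular A ht]
    apply Finset.prod_eq_one
    intro i _
    have := PP_diag (i:ℕ) 0
    simpa [A] using this
  have hdetD : Dg.det = 2 ^ (n * (n-1) / 2) := by
    rw [Matrix.det_diagonal, Finset.prod_pow_eq_pow_sum]
    congr 1
    rw [Fin.sum_univ_eq_sum_range (fun j => j) n, Finset.sum_range_id]
  rw [hdetA, hdetD]
  ring
end
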